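/- arXiv:math/0501126 — 2 statements merged into one kernel-verified Lean document; each statement's English description precedes it below -/
import Mathlib

section
/- For every ε > 0 there exists a constant C (depending only on ε) with the following property. Let δ ∈ (0,1], T > 0, and let π = (γ, v, D, α) : [0,T] → ℝ⁴ be continuously differentiable with |π'(t)| ≤ δ²(1+t)^(−2−ε) and |v(t)| + |D(t)| + |α(t)| ≤ 1 for all t ∈ [0,T]. Then for all 0 ≤ t ≤ T and all x ∈ ℝ: |ρ_T(t,x)| ≤ C δ² (1+|x|)(1+t)^(−ε), |y(t) − y_T(t)| ≤ C δ² (1+t)^(−ε), |∂ₜ ρ_T(t,x)| ≤ C δ² (1+|x|)(1+t)^(−1−ε), and |y'(t) − 2v_T| ≤ C δ² (1+t)^(−1−ε). -/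
noncomputable section

open Real Set MeasureTheory intervalIntegral

lemma my_ftc {T : ℝ} {f f' : ℝ → ℝ}
    (hd : ∀ t ∈ Icc (0:ℝ) T, HasDerivWithinAt f (f' t) (Icc 0 T) t)
    (hc : ContinuousOn f' (Icc 0 T)) {a b : ℝ} (ha : 0 ≤ a) (hab : a ≤ b) (hb : b ≤ T) :
    ∫ s in a..b, f' s = f b - f a := by
  have hsub : Icc a b ⊆ Icc 0 T := Icc_subset_Icc ha hb
  have hfc : ContinuousOn f (Icc 0 T) := fun x hx => (hd x hx).continuousWithinAt
  refine integral_eq_sub_of_hasDeriv_right_of_le hab (hfc.mono hsub) (fun x hx => ?_)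
    ((hc.mono hsub).intervalIntegrable_of_Icc hab)
  have hx' : x ∈ Ioo (0:ℝ) T := ⟨lt_of_le_of_lt ha hx.1, lt_of_lt_of_le hx.2 hb⟩
  have := (hd x (Ioo_subset_Icc_self hx')).hasDerivAt (Icc_mem_nhds hx'.1 hx'.2)
  exact this.hasDerivWithinAt

lemma my_rpow_int {p a b : ℝ} (hp : 0 < p) (ha : 0 ≤ a) (hab : a ≤ b) :
    ∫ s in a..b, (1+s)^(-(1+p)) ≤ (1+a)^(-p) / p := by
  have key : ∀ x ∈ Set.uIcc a b, HasDerivAt (fun s => -(1+s)^(-p)/p) ((1+x)^(-(1+p))) x := by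
    intro x hx
    have hx0 : (0:ℝ) ≤ x := by
      simp [Set.uIcc_of_le hab] at hx; linarith [hx.1]
    have h1x : (0:ℝ) < 1 + x := by linarith
    have h1 : HasDerivAt (fun s : ℝ => (1+s)) 1 x := by
      simpa using (hasDerivAt_id x).const_add (1:ℝ)
    have h2 : HasDerivAt (fun s : ℝ => (1+s)^(-p)) (-p * (1+x)^(-p-1) * 1) x :=
      (Real.hasDerivAt_rpow_const (Or.inl h1x.ne')).comp x h1
    have h3 := (h2.neg).div_const p
    refine h3.congr_deriv ?_
    rw [show -p - 1 = -(1+p) by ring]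
    field_simp
  have hint : IntervalIntegrable (fun s => (1+s)^(-(1+p))) volume a b := by
    apply ContinuousOn.intervalIntegrable
    intro x hx
    have hx0 : (0:ℝ) ≤ x := by simp [Set.uIcc_of_le hab] at hx; linarith [hx.1]
    have h1x : (1:ℝ)+x ≠ 0 := by positivity
    have := (Real.continuousAt_rpow_const (1+x) (-(1+p)) (Or.inl h1x)).comp
      (continuous_const.add continuous_id).continuousAt
    exact this.continuousWithinAt
  rw [integral_eq_sub_of_hasDerivAt key hint]
  have hb0 : (0:ℝ) ≤ b := le_trans ha hab
  have h1 : (0:ℝ) ≤ (1+b)^(-p) := Real.rpow_nonneg (by linarith) _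
  have : -(1+b)^(-p)/p - -(1+a)^(-p)/p = ((1+a)^(-p) - (1+b)^(-p))/p := by ring
  rw [this]
  gcongr
  linarith

lemma my_rpow_intble {a b q : ℝ} (ha : 0 ≤ a) (hab : a ≤ b) :
    IntervalIntegrable (fun s => (1+s)^q) volume a b := by
  apply ContinuousOn.intervalIntegrable
  intro x hx
  have hx0 : (0:ℝ) ≤ x := by simp [Set.uIcc_of_le hab] at hx; linarith [hx.1]
  have h1x : (1:ℝ)+x ≠ 0 := by positivity
  have := (Real.continuousAt_rpow_const (1+x) q (Or.inl h1x)).comp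
    (continuous_const.add continuous_id).continuousAt
  exact this.continuousWithinAt

lemma my_int_bound {f g : ℝ → ℝ} {a b : ℝ} (hab : a ≤ b)
    (hf : IntervalIntegrable f volume a b) (hg : IntervalIntegrable g volume a b)
    (h : ∀ x ∈ Icc a b, |f x| ≤ g x) : |∫ x in a..b, f x| ≤ ∫ x in a..b, g x :=
  le_trans (intervalIntegral.abs_integral_le_integral_abs hab)
    (intervalIntegral.integral_mono_on hab hf.abs hg h)

lemma my_int_tail {p c : ℝ} (hp : 0 < p) (hc : 0 ≤ c) {h : ℝ → ℝ} {a b : ℝ}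
    (ha : 0 ≤ a) (hab : a ≤ b)
    (hint : IntervalIntegrable h volume a b)
    (hbd : ∀ s ∈ Icc a b, |h s| ≤ c * (1+s)^(-(1+p))) :
    |∫ s in a..b, h s| ≤ c / p * (1+a)^(-p) := by
  have hg : IntervalIntegrable (fun s => c * (1+s)^(-(1+p))) volume a b :=
    (my_rpow_intble ha hab).const_mul c
  calc |∫ s in a..b, h s| ≤ ∫ s in a..b, c * (1+s)^(-(1+p)) := my_int_bound hab hint hg hbd
    _ = c * ∫ s in a..b, (1+s)^(-(1+p)) := intervalIntegral.integral_const_mul c _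
    _ ≤ c * ((1+a)^(-p) / p) := mul_le_mul_of_nonneg_left (my_rpow_int hp ha hab) hc
    _ = c / p * (1+a)^(-p) := by ring

lemma my_tail {T ε δ : ℝ} (hε : 0 < ε) (hδ : 0 ≤ δ) {f f' : ℝ → ℝ}
    (hd : ∀ t ∈ Icc (0:ℝ) T, HasDerivWithinAt f (f' t) (Icc 0 T) t)
    (hc : ContinuousOn f' (Icc 0 T))
    (hb' : ∀ s ∈ Icc (0:ℝ) T, |f' s| ≤ δ * (1+s)^(-(2+ε)))
    {a : ℝ} (ha : 0 ≤ a) (haT : a ≤ T) :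
    |f T - f a| ≤ δ / (1+ε) * (1+a)^(-(1+ε)) := by
  rw [← my_ftc hd hc ha haT le_rfl]
  refine my_int_tail (by linarith : (0:ℝ) < 1+ε) hδ ha haT
    ((hc.mono (Icc_subset_Icc ha le_rfl)).intervalIntegrable_of_Icc haT) ?_
  intro s hs
  have hs' : s ∈ Icc (0:ℝ) T := ⟨le_trans ha hs.1, hs.2⟩
  have := hb' s hs'
  rwa [show -(1+(1+ε)) = -(2+ε) by ring]

set_option maxHeartbeats 1600000 in
theorem stmt_1 (ε : ℝ) (hε : 0 < ε) :
    ∃ C : ℝ, 0 < C ∧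
      ∀ (δ T : ℝ), 0 < δ → δ ≤ 1 → 0 < T →
      ∀ (γ v D α γ' v' D' α' : ℝ → ℝ),
        (∀ t ∈ Set.Icc (0:ℝ) T, HasDerivWithinAt γ (γ' t) (Set.Icc 0 T) t) →
        (∀ t ∈ Set.Icc (0:ℝ) T, HasDerivWithinAt v (v' t) (Set.Icc 0 T) t) →
        (∀ t ∈ Set.Icc (0:ℝ) T, HasDerivWithinAt D (D' t) (Set.Icc 0 T) t) →
        (∀ t ∈ Set.Icc (0:ℝ) T, HasDerivWithinAt α (α' t) (Set.Icc 0 T) t) →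
        ContinuousOn γ' (Set.Icc 0 T) → ContinuousOn v' (Set.Icc 0 T) →
        ContinuousOn D' (Set.Icc 0 T) → ContinuousOn α' (Set.Icc 0 T) →
        (∀ t ∈ Set.Icc (0:ℝ) T,
          Real.sqrt (γ' t ^ 2 + v' t ^ 2 + D' t ^ 2 + α' t ^ 2)
            ≤ δ ^ 2 * (1 + t) ^ (-(2 + ε))) →
        (∀ t ∈ Set.Icc (0:ℝ) T, |v t| + |D t| + |α t| ≤ 1) →
        let vT := v T
        let αT := α T
        let γT := γ T + 2 * ∫ t in (0:ℝ)..T, ∫ s in t..T, (v s * v' s - α s * α' s)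
        let DT := D T - 2 * ∫ t in (0:ℝ)..T, ∫ s in t..T, v' s
        let y : ℝ → ℝ := fun t => (2 * ∫ s in (0:ℝ)..t, v s) + D t
        let yT : ℝ → ℝ := fun t => 2 * t * vT + DT
        let θ : ℝ → ℝ → ℝ := fun t x =>
          v t * x - (∫ s in (0:ℝ)..t, (v s ^ 2 - α s ^ 2)) + γ t
        let θT : ℝ → ℝ → ℝ := fun t x => vT * x - t * (vT ^ 2 - αT ^ 2) + γT
        let ρ : ℝ → ℝ → ℝ := fun t x => θ t (x + yT t) - θT t (x + yT t)
        ∀ t ∈ Set.Icc (0:ℝ) T, ∀ x : ℝ,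
          |ρ t x| ≤ C * δ ^ 2 * (1 + |x|) * (1 + t) ^ (-ε) ∧
          |y t - yT t| ≤ C * δ ^ 2 * (1 + t) ^ (-ε) ∧
          |derivWithin (fun s => ρ s x) (Set.Icc 0 T) t|
            ≤ C * δ ^ 2 * (1 + |x|) * (1 + t) ^ (-(1 + ε)) ∧
          |derivWithin y (Set.Icc 0 T) t - 2 * vT|
            ≤ C * δ ^ 2 * (1 + t) ^ (-(1 + ε)) := by
  refine ⟨8 + 8/ε, by positivity, ?_⟩
  intro δ T hδ hδ1 hT γ v D α γ' v' D' α' hdγ hdv hdD hdα hcγ hcv hcD hcα hπ hbd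
  intro vT αT γT DT y yT θ θT ρ t ht x
  obtain ⟨ht0, htT⟩ := ht
  have ht' : t ∈ Icc (0:ℝ) T := ⟨ht0, htT⟩
  have hε1 : (0:ℝ) < 1 + ε := by linarith
  have h1t : (0:ℝ) < 1 + t := by linarith
  have h1t1 : (1:ℝ) ≤ 1 + t := by linarith
  have hδ2 : (0:ℝ) ≤ δ^2 := sq_nonneg δ
  have hδ21 : δ^2 ≤ 1 := by nlinarith
  -- component derivative bounds
  have hcompb : ∀ (f : ℝ → ℝ), (∀ s, (f s)^2 ≤ γ' s ^ 2 + v' s ^ 2 + D' s ^ 2 + α' s ^ 2) →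
      ∀ s ∈ Icc (0:ℝ) T, |f s| ≤ δ^2 * (1+s)^(-(2+ε)) := by
    intro f hf s hs
    have h1 : |f s| ≤ Real.sqrt (γ' s ^ 2 + v' s ^ 2 + D' s ^ 2 + α' s ^ 2) := by
      rw [← Real.sqrt_sq_eq_abs]
      exact Real.sqrt_le_sqrt (hf s)
    exact h1.trans (hπ s hs)
  have hbγ' : ∀ s ∈ Icc (0:ℝ) T, |γ' s| ≤ δ^2 * (1+s)^(-(2+ε)) :=
    hcompb γ' (fun s => by nlinarith [sq_nonneg (v' s), sq_nonneg (D' s), sq_nonneg (α' s)])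
  have hbv' : ∀ s ∈ Icc (0:ℝ) T, |v' s| ≤ δ^2 * (1+s)^(-(2+ε)) :=
    hcompb v' (fun s => by nlinarith [sq_nonneg (γ' s), sq_nonneg (D' s), sq_nonneg (α' s)])
  have hbD' : ∀ s ∈ Icc (0:ℝ) T, |D' s| ≤ δ^2 * (1+s)^(-(2+ε)) :=
    hcompb D' (fun s => by nlinarith [sq_nonneg (γ' s), sq_nonneg (v' s), sq_nonneg (α' s)])
  have hbα' : ∀ s ∈ Icc (0:ℝ) T, |α' s| ≤ δ^2 * (1+s)^(-(2+ε)) :=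
    hcompb α' (fun s => by nlinarith [sq_nonneg (γ' s), sq_nonneg (v' s), sq_nonneg (D' s)])
  -- tail bounds
  have htγ : ∀ a ∈ Icc (0:ℝ) T, |γ T - γ a| ≤ δ^2/(1+ε) * (1+a)^(-(1+ε)) :=
    fun a ha => my_tail hε hδ2 hdγ hcγ hbγ' ha.1 ha.2
  have htv : ∀ a ∈ Icc (0:ℝ) T, |v T - v a| ≤ δ^2/(1+ε) * (1+a)^(-(1+ε)) :=
    fun a ha => my_tail hε hδ2 hdv hcv hbv' ha.1 ha.2
  have htD : ∀ a ∈ Icc (0:ℝ) T, |D T - D a| ≤ δ^2/(1+ε) * (1+a)^(-(1+ε)) :=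
    fun a ha => my_tail hε hδ2 hdD hcD hbD' ha.1 ha.2
  have htα : ∀ a ∈ Icc (0:ℝ) T, |α T - α a| ≤ δ^2/(1+ε) * (1+a)^(-(1+ε)) :=
    fun a ha => my_tail hε hδ2 hdα hcα hbα' ha.1 ha.2
  -- value bounds
  have hv1 : ∀ s ∈ Icc (0:ℝ) T, |v s| ≤ 1 := fun s hs => by
    have := hbd s hs; have := abs_nonneg (D s); have := abs_nonneg (α s); linarith
  have hD1 : ∀ s ∈ Icc (0:ℝ) T, |D s| ≤ 1 := fun s hs => by
    have := hbd s hs; have := abs_nonneg (v s); have := abs_nonneg (α s); linarith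
  have hα1 : ∀ s ∈ Icc (0:ℝ) T, |α s| ≤ 1 := fun s hs => by
    have := hbd s hs; have := abs_nonneg (v s); have := abs_nonneg (D s); linarith
  have hTmem : T ∈ Icc (0:ℝ) T := ⟨hT.le, le_rfl⟩
  -- continuity
  have hvc : ContinuousOn v (Icc 0 T) := fun s hs => (hdv s hs).continuousWithinAt
  have hαc : ContinuousOn α (Icc 0 T) := fun s hs => (hdα s hs).continuousWithinAt
  have hgc : ContinuousOn (fun s => v s ^ 2 - α s ^ 2) (Icc 0 T) :=
    (hvc.pow 2).sub (hαc.pow 2)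
  -- rpow facts
  have hQpos : (0:ℝ) < (1+t)^(-(1+ε)) := Real.rpow_pos_of_pos h1t _
  have hPpos : (0:ℝ) < (1+t)^(-ε) := Real.rpow_pos_of_pos h1t _
  have hRpos : (0:ℝ) < (1+t)^(-(2+ε)) := Real.rpow_pos_of_pos h1t _
  have hQP : (1+t)^(-(1+ε)) ≤ (1+t)^(-ε) :=
    Real.rpow_le_rpow_of_exponent_le h1t1 (by linarith)
  have hRQ : (1+t)^(-(2+ε)) ≤ (1+t)^(-(1+ε)) :=
    Real.rpow_le_rpow_of_exponent_le h1t1 (by linarith)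
  have hP1 : (1+t)^(-ε) ≤ 1 := by
    calc (1+t)^(-ε) ≤ (1+t)^(0:ℝ) := Real.rpow_le_rpow_of_exponent_le h1t1 (by linarith)
      _ = 1 := Real.rpow_zero _
  have hQ1 : (1+t)^(-(1+ε)) ≤ 1 := le_trans hQP hP1
  have htQ : (1+t)^(-ε) = (1+t) * (1+t)^(-(1+ε)) := by
    rw [show -ε = 1 + -(1+ε) by ring, Real.rpow_add h1t, Real.rpow_one]
  have htR : (1+t)^(-(1+ε)) = (1+t) * (1+t)^(-(2+ε)) := by
    rw [show -(1+ε) = 1 + -(2+ε) by ring, Real.rpow_add h1t, Real.rpow_one]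
  -- FTC identities
  have hI1 : ∀ s ∈ Icc (0:ℝ) T, (∫ u in s..T, v' u) = v T - v s :=
    fun s hs => my_ftc hdv hcv hs.1 hs.2 le_rfl
  have hI2 : ∀ s ∈ Icc (0:ℝ) T, (∫ u in s..T, (v u * v' u - α u * α' u))
      = ((v T)^2 - (α T)^2)/2 - ((v s)^2 - (α s)^2)/2 := by
    intro s hs
    have hd2 : ∀ u ∈ Icc (0:ℝ) T, HasDerivWithinAt (fun r => ((v r)^2 - (α r)^2)/2)
        (v u * v' u - α u * α' u) (Icc 0 T) u := by
      intro u hu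
      have h1 := (((hdv u hu).pow 2).sub ((hdα u hu).pow 2)).div_const 2
      refine h1.congr_deriv ?_
      push_cast
      ring
    exact my_ftc hd2 ((hvc.mul hcv).sub (hαc.mul hcα)) hs.1 hs.2 le_rfl
  -- definitional unfoldings
  have hvT : vT = v T := rfl
  have hαT : αT = α T := rfl
  have hyTdef : ∀ s, yT s = 2*s*vT + DT := fun s => rfl
  have hydef : ∀ s, y s = (2 * ∫ u in (0:ℝ)..s, v u) + D s := fun s => rfl
  have hρdef : ∀ s z, ρ s z = v s * (z + yT s) - (∫ u in (0:ℝ)..s, (v u ^ 2 - α u ^ 2)) + γ s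
      - (vT * (z + yT s) - s * (vT^2 - αT^2) + γT) := fun s z => rfl
  -- DT and γT closed forms
  have hDT2 : DT = D T - 2*(T * v T - ∫ s in (0:ℝ)..T, v s) := by
    show D T - 2 * ∫ s in (0:ℝ)..T, ∫ u in s..T, v' u = _
    congr 1
    congr 1
    rw [intervalIntegral.integral_congr (g := fun s => v T - v s)
      (fun s hs => hI1 s (by rwa [uIcc_of_le hT.le] at hs))]
    rw [intervalIntegral.integral_sub intervalIntegrable_const
      (hvc.intervalIntegrable_of_Icc hT.le)]
    simp [smul_eq_mul]
  have hγT2 : γT = γ T + T*((v T)^2 - (α T)^2) - ∫ s in (0:ℝ)..T, (v s ^ 2 - α s ^ 2) := by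
    show γ T + 2 * ∫ s in (0:ℝ)..T, ∫ u in s..T, (v u * v' u - α u * α' u) = _
    rw [intervalIntegral.integral_congr
      (g := fun s => ((v T)^2 - (α T)^2)/2 - ((v s)^2 - (α s)^2)/2)
      (fun s hs => hI2 s (by rwa [uIcc_of_le hT.le] at hs))]
    rw [intervalIntegral.integral_sub intervalIntegrable_const
      ((hgc.intervalIntegrable_of_Icc hT.le).div_const 2),
      intervalIntegral.integral_const, intervalIntegral.integral_div, smul_eq_mul]
    ring
  -- splitting integrals at t
  have hsplitv : (∫ s in (0:ℝ)..t, v s) + (∫ s in t..T, v s) = ∫ s in (0:ℝ)..T, v s :=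
    integral_add_adjacent_intervals
      ((hvc.mono (Icc_subset_Icc le_rfl htT)).intervalIntegrable_of_Icc ht0)
      ((hvc.mono (Icc_subset_Icc ht0 le_rfl)).intervalIntegrable_of_Icc htT)
  have hsplitg : (∫ s in (0:ℝ)..t, (v s ^2 - α s ^2)) + (∫ s in t..T, (v s ^2 - α s ^2))
      = ∫ s in (0:ℝ)..T, (v s ^2 - α s ^2) :=
    integral_add_adjacent_intervals
      ((hgc.mono (Icc_subset_Icc le_rfl htT)).intervalIntegrable_of_Icc ht0)
      ((hgc.mono (Icc_subset_Icc ht0 le_rfl)).intervalIntegrable_of_Icc htT)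
  -- subtracted integrals on [t,T]
  have hsubv : ∫ s in t..T, (v s - v T) = (∫ s in t..T, v s) - (T - t) * v T := by
    rw [intervalIntegral.integral_sub
      ((hvc.mono (Icc_subset_Icc ht0 le_rfl)).intervalIntegrable_of_Icc htT)
      intervalIntegrable_const]
    simp [smul_eq_mul]
  have hsubg : ∫ s in t..T, ((v s ^2 - α s ^2) - ((v T)^2 - (α T)^2))
      = (∫ s in t..T, (v s ^2 - α s ^2)) - (T - t) * ((v T)^2 - (α T)^2) := by
    rw [intervalIntegral.integral_sub
      ((hgc.mono (Icc_subset_Icc ht0 le_rfl)).intervalIntegrable_of_Icc htT)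
      intervalIntegrable_const]
    simp only [intervalIntegral.integral_const, smul_eq_mul]
  -- key identities
  have hyeq : y t - yT t = (D t - D T) - 2 * ∫ s in t..T, (v s - v T) := by
    rw [hydef, hyTdef, hDT2, hvT, hsubv]
    linarith [hsplitv]
  have hρeq : ρ t x = (v t - v T) * (x + yT t) + (γ t - γ T)
      + ∫ s in t..T, ((v s ^2 - α s ^2) - ((v T)^2 - (α T)^2)) := by
    rw [hρdef, hγT2, hvT, hαT, hsubg]
    linarith [hsplitg]
  -- scalar helpers
  have hK : δ^2/(1+ε) ≤ δ^2 := by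
    rw [div_le_iff₀ hε1]; nlinarith
  have hK0 : (0:ℝ) ≤ δ^2/(1+ε) := by positivity
  have hK1 : δ^2/(1+ε) ≤ 1 := le_trans hK hδ21
  have hX1 : (1:ℝ) ≤ 1 + |x| := by linarith [abs_nonneg x]
  have hX0 : (0:ℝ) ≤ 1 + |x| := by linarith
  have hvTb : |vT| ≤ 1 := hv1 T hTmem
  -- DT bound
  have hDTdef : DT = D T - 2 * ∫ s in (0:ℝ)..T, ∫ u in s..T, v' u := rfl
  have hDTb : |DT| ≤ 1 + 2/ε := by
    have h1 : |∫ s in (0:ℝ)..T, ∫ u in s..T, v' u| ≤ (δ^2/(1+ε))/ε * (1+0)^(-ε) := by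
      refine my_int_tail hε hK0 le_rfl hT.le ?_ ?_
      · refine ContinuousOn.intervalIntegrable_of_Icc hT.le ?_
        exact (continuousOn_const.sub hvc).congr (fun s hs => hI1 s hs)
      · intro s hs
        rw [hI1 s hs]
        exact htv s hs
    rw [show ((1:ℝ)+0) = 1 by norm_num, Real.one_rpow, mul_one] at h1
    have h2 : (δ^2/(1+ε))/ε ≤ 1/ε := by
      exact (div_le_div_iff_of_pos_right hε).mpr hK1
    have h3 := hD1 T hTmem
    calc |DT| = |D T - 2 * ∫ s in (0:ℝ)..T, ∫ u in s..T, v' u| := by rw [hDTdef]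
      _ ≤ |D T| + |2 * ∫ s in (0:ℝ)..T, ∫ u in s..T, v' u| := abs_sub _ _
      _ = |D T| + 2 * |∫ s in (0:ℝ)..T, ∫ u in s..T, v' u| := by
          rw [abs_mul, abs_two]
      _ ≤ 1 + 2 * (1/ε) := by linarith
      _ = 1 + 2/ε := by ring
  have hc0 : (0:ℝ) ≤ 2/ε := by positivity
  have hxyb : |x + yT t| ≤ |x| + 2*t + (1 + 2/ε) := by
    have h1 : |2*t*vT| ≤ 2*t := by
      rw [abs_mul, abs_of_nonneg (by linarith : (0:ℝ) ≤ 2*t)]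
      nlinarith [hvTb, abs_nonneg vT, ht0]
    calc |x + yT t| = |x + (2*t*vT + DT)| := by rw [hyTdef]
      _ ≤ |x| + |2*t*vT + DT| := abs_add_le _ _
      _ ≤ |x| + (|2*t*vT| + |DT|) := by linarith [abs_add_le (2*t*vT) DT]
      _ ≤ |x| + 2*t + (1 + 2/ε) := by linarith
  have hxyb2 : |x + yT t| ≤ (3 + 2/ε) * ((1+|x|)*(1+t)) := by
    refine hxyb.trans ?_
    have hax := abs_nonneg x
    nlinarith [mul_nonneg hax ht0, mul_nonneg hc0 hax, mul_nonneg hc0 ht0,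
      mul_nonneg (mul_nonneg hc0 hax) ht0]
  -- ===== Bound 1 : |ρ t x| =====
  have e2ρ : |γ t - γ T| ≤ δ^2/(1+ε) * (1+t)^(-(1+ε)) := by
    rw [abs_sub_comm]; exact htγ t ht'
  have e3ρ : |∫ s in t..T, ((v s ^2 - α s ^2) - ((v T)^2 - (α T)^2))|
      ≤ (4*(δ^2/(1+ε)))/ε * (1+t)^(-ε) := by
    refine my_int_tail hε (by positivity) ht0 htT ?_ ?_
    · exact ((hgc.mono (Icc_subset_Icc ht0 le_rfl)).sub
        continuousOn_const).intervalIntegrable_of_Icc htT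
    · intro s hs
      have hs' : s ∈ Icc (0:ℝ) T := ⟨le_trans ht0 hs.1, hs.2⟩
      have h1 : |v s - v T| ≤ δ^2/(1+ε) * (1+s)^(-(1+ε)) := by
        rw [abs_sub_comm]; exact htv s hs'
      have h2 : |α s - α T| ≤ δ^2/(1+ε) * (1+s)^(-(1+ε)) := by
        rw [abs_sub_comm]; exact htα s hs'
      have h3 : |v s + v T| ≤ 2 := by
        have := hv1 s hs'; have := hv1 T hTmem
        calc |v s + v T| ≤ |v s| + |v T| := abs_add_le _ _
          _ ≤ 2 := by linarith
      have h4 : |α s + α T| ≤ 2 := by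
        have := hα1 s hs'; have := hα1 T hTmem
        calc |α s + α T| ≤ |α s| + |α T| := abs_add_le _ _
          _ ≤ 2 := by linarith
      have expand : v s ^2 - α s ^2 - ((v T)^2 - (α T)^2)
          = (v s - v T)*(v s + v T) - (α s - α T)*(α s + α T) := by ring
      rw [expand]
      calc |(v s - v T)*(v s + v T) - (α s - α T)*(α s + α T)|
          ≤ |(v s - v T)*(v s + v T)| + |(α s - α T)*(α s + α T)| := abs_sub _ _
        _ = |v s - v T| * |v s + v T| + |α s - α T| * |α s + α T| := by
            rw [abs_mul, abs_mul]
        _ ≤ (δ^2/(1+ε) * (1+s)^(-(1+ε))) * 2 + (δ^2/(1+ε) * (1+s)^(-(1+ε))) * 2 := by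
            have q0 : (0:ℝ) ≤ (1+s)^(-(1+ε)) :=
              Real.rpow_nonneg (by linarith [hs'.1] : (0:ℝ) ≤ 1+s) _
            exact add_le_add
              (mul_le_mul h1 h3 (abs_nonneg _) (mul_nonneg hK0 q0))
              (mul_le_mul h2 h4 (abs_nonneg _) (mul_nonneg hK0 q0))
        _ = 4*(δ^2/(1+ε)) * (1+s)^(-(1+ε)) := by ring
  have e1ρ : |(v t - v T) * (x + yT t)|
      ≤ (3+2/ε) * (δ^2/(1+ε)) * ((1+|x|) * (1+t)^(-ε)) := by
    rw [abs_mul]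
    have h1 : |v t - v T| ≤ δ^2/(1+ε) * (1+t)^(-(1+ε)) := by
      rw [abs_sub_comm]; exact htv t ht'
    calc |v t - v T| * |x + yT t|
        ≤ (δ^2/(1+ε) * (1+t)^(-(1+ε))) * ((3 + 2/ε)*((1+|x|)*(1+t))) :=
          mul_le_mul h1 hxyb2 (abs_nonneg _) (by positivity)
      _ = (3+2/ε) * (δ^2/(1+ε)) * ((1+|x|) * ((1+t) * (1+t)^(-(1+ε)))) := by ring
      _ = (3+2/ε) * (δ^2/(1+ε)) * ((1+|x|) * (1+t)^(-ε)) := by rw [← htQ]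
  have hb1 : |ρ t x| ≤ (8+8/ε) * δ^2 * (1+|x|) * (1+t)^(-ε) := by
    rw [hρeq]
    have tri : |(v t - v T) * (x + yT t) + (γ t - γ T)
        + ∫ s in t..T, ((v s ^2 - α s ^2) - ((v T)^2 - (α T)^2))|
        ≤ |(v t - v T) * (x + yT t)| + |γ t - γ T|
        + |∫ s in t..T, ((v s ^2 - α s ^2) - ((v T)^2 - (α T)^2))| := by
      have h1 := abs_add_le ((v t - v T) * (x + yT t) + (γ t - γ T))
        (∫ s in t..T, ((v s ^2 - α s ^2) - ((v T)^2 - (α T)^2)))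
      have h2 := abs_add_le ((v t - v T) * (x + yT t)) (γ t - γ T)
      linarith
    have s2 : |γ t - γ T| ≤ δ^2 * ((1+|x|) * (1+t)^(-ε)) := by
      refine e2ρ.trans ?_
      calc δ^2/(1+ε) * (1+t)^(-(1+ε)) ≤ δ^2 * (1+t)^(-ε) :=
            mul_le_mul hK hQP hQpos.le hδ2
        _ = δ^2 * (1 * (1+t)^(-ε)) := by ring
        _ ≤ δ^2 * ((1+|x|) * (1+t)^(-ε)) :=
            mul_le_mul_of_nonneg_left
              (mul_le_mul_of_nonneg_right hX1 hPpos.le) hδ2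
    have s3 : |∫ s in t..T, ((v s ^2 - α s ^2) - ((v T)^2 - (α T)^2))|
        ≤ 4/ε * δ^2 * ((1+|x|) * (1+t)^(-ε)) := by
      refine e3ρ.trans ?_
      have h4ε : (0:ℝ) ≤ 4/ε := (div_pos (by norm_num) hε).le
      have h1 : (4*(δ^2/(1+ε)))/ε ≤ 4/ε * δ^2 := by
        have heq : (4*(δ^2/(1+ε)))/ε = 4/ε * (δ^2/(1+ε)) := by ring
        rw [heq]
        exact mul_le_mul_of_nonneg_left hK h4ε
      calc (4*(δ^2/(1+ε)))/ε * (1+t)^(-ε) ≤ 4/ε * δ^2 * (1+t)^(-ε) :=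
            mul_le_mul_of_nonneg_right h1 hPpos.le
        _ = 4/ε * δ^2 * (1 * (1+t)^(-ε)) := by ring
        _ ≤ 4/ε * δ^2 * ((1+|x|) * (1+t)^(-ε)) :=
            mul_le_mul_of_nonneg_left
              (mul_le_mul_of_nonneg_right hX1 hPpos.le) (mul_nonneg h4ε hδ2)
    have s1 : |(v t - v T) * (x + yT t)| ≤ (3+2/ε) * δ^2 * ((1+|x|) * (1+t)^(-ε)) := by
      refine e1ρ.trans ?_
      have h1 : (3+2/ε) * (δ^2/(1+ε)) ≤ (3+2/ε) * δ^2 :=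
        mul_le_mul_of_nonneg_left hK (by linarith)
      exact mul_le_mul_of_nonneg_right h1 (by positivity)
    have hfin : (3+2/ε) * δ^2 * ((1+|x|) * (1+t)^(-ε)) + δ^2 * ((1+|x|) * (1+t)^(-ε))
        + 4/ε * δ^2 * ((1+|x|) * (1+t)^(-ε)) ≤ (8+8/ε) * δ^2 * (1+|x|) * (1+t)^(-ε) := by
      have hXP : (0:ℝ) ≤ (1+|x|) * (1+t)^(-ε) := by positivity
      have h68 : (3+2/ε) + 1 + 4/ε ≤ 8+8/ε := by
        have : 2/ε ≤ 8/ε := (div_le_div_iff_of_pos_right hε).mpr (by norm_num)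
        have h2 : (2:ℝ)/ε + 4/ε ≤ 8/ε := by
          rw [← add_div]; exact (div_le_div_iff_of_pos_right hε).mpr (by norm_num)
        linarith
      calc (3+2/ε) * δ^2 * ((1+|x|) * (1+t)^(-ε)) + δ^2 * ((1+|x|) * (1+t)^(-ε))
          + 4/ε * δ^2 * ((1+|x|) * (1+t)^(-ε))
          = ((3+2/ε) + 1 + 4/ε) * (δ^2 * ((1+|x|) * (1+t)^(-ε))) := by ring
        _ ≤ (8+8/ε) * (δ^2 * ((1+|x|) * (1+t)^(-ε))) :=
            mul_le_mul_of_nonneg_right h68 (mul_nonneg hδ2 hXP)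
        _ = (8+8/ε) * δ^2 * (1+|x|) * (1+t)^(-ε) := by ring
    calc _ ≤ _ := tri
      _ ≤ (3+2/ε) * δ^2 * ((1+|x|) * (1+t)^(-ε)) + δ^2 * ((1+|x|) * (1+t)^(-ε))
          + 4/ε * δ^2 * ((1+|x|) * (1+t)^(-ε)) := by linarith
      _ ≤ (8+8/ε) * δ^2 * (1+|x|) * (1+t)^(-ε) := hfin
  -- ===== Bound 2 : |y - yT| =====
  have hb2 : |y t - yT t| ≤ (8+8/ε) * δ^2 * (1+t)^(-ε) := by
    rw [hyeq]
    have e2 : |∫ s in t..T, (v s - v T)| ≤ (δ^2/(1+ε))/ε * (1+t)^(-ε) := by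
      refine my_int_tail hε hK0 ht0 htT
        (((hvc.mono (Icc_subset_Icc ht0 le_rfl)).sub
          continuousOn_const).intervalIntegrable_of_Icc htT) ?_
      intro s hs
      rw [abs_sub_comm]
      exact htv s ⟨le_trans ht0 hs.1, hs.2⟩
    have e1 : |D t - D T| ≤ δ^2/(1+ε) * (1+t)^(-(1+ε)) := by
      rw [abs_sub_comm]; exact htD t ht'
    have tri : |(D t - D T) - 2 * ∫ s in t..T, (v s - v T)|
        ≤ |D t - D T| + 2 * |∫ s in t..T, (v s - v T)| := by
      calc |(D t - D T) - 2 * ∫ s in t..T, (v s - v T)|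
          ≤ |D t - D T| + |2 * ∫ s in t..T, (v s - v T)| := abs_sub _ _
        _ = |D t - D T| + 2 * |∫ s in t..T, (v s - v T)| := by rw [abs_mul, abs_two]
    have s1 : δ^2/(1+ε) * (1+t)^(-(1+ε)) ≤ δ^2 * (1+t)^(-ε) :=
      mul_le_mul hK hQP hQpos.le hδ2
    have s2 : (δ^2/(1+ε))/ε * (1+t)^(-ε) ≤ δ^2/ε * (1+t)^(-ε) :=
      mul_le_mul_of_nonneg_right ((div_le_div_iff_of_pos_right hε).mpr hK) hPpos.le
    have hfin : δ^2 * (1+t)^(-ε) + 2 * (δ^2/ε * (1+t)^(-ε))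
        ≤ (8+8/ε) * δ^2 * (1+t)^(-ε) := by
      have h1 : δ^2/ε = 1/ε * δ^2 := by ring
      have h2 : (1:ℝ) + 2*(1/ε) ≤ 8 + 8/ε := by
        have : 2*(1/ε) ≤ 8/ε := by rw [mul_one_div]; exact (div_le_div_iff_of_pos_right hε).mpr (by norm_num)
        linarith
      calc δ^2 * (1+t)^(-ε) + 2 * (δ^2/ε * (1+t)^(-ε))
          = (1 + 2*(1/ε)) * (δ^2 * (1+t)^(-ε)) := by ring
        _ ≤ (8+8/ε) * (δ^2 * (1+t)^(-ε)) :=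
            mul_le_mul_of_nonneg_right h2 (mul_nonneg hδ2 hPpos.le)
        _ = (8+8/ε) * δ^2 * (1+t)^(-ε) := by ring
    linarith
  -- ===== FTC derivatives at t =====
  haveI hFact : Fact (t ∈ Icc (0:ℝ) T) := ⟨ht'⟩
  have hFTCv : HasDerivWithinAt (fun s => ∫ u in (0:ℝ)..s, v u) (v t) (Icc 0 T) t :=
    intervalIntegral.integral_hasDerivWithinAt_right
      ((hvc.mono (Icc_subset_Icc le_rfl htT)).intervalIntegrable_of_Icc ht0)
      (hvc.stronglyMeasurableAtFilter_nhdsWithin measurableSet_Icc t)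
      (hvc t ht')
  have hFTCg : HasDerivWithinAt (fun s => ∫ u in (0:ℝ)..s, (v u ^2 - α u ^2))
      (v t ^2 - α t ^2) (Icc 0 T) t :=
    intervalIntegral.integral_hasDerivWithinAt_right
      ((hgc.mono (Icc_subset_Icc le_rfl htT)).intervalIntegrable_of_Icc ht0)
      (hgc.stronglyMeasurableAtFilter_nhdsWithin measurableSet_Icc t)
      (hgc t ht')
  have hUD := (uniqueDiffOn_Icc hT) t ht'
  -- ===== Bound 4 : derivative of y =====
  have hdy : HasDerivWithinAt y (2 * v t + D' t) (Icc 0 T) t :=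
    (hFTCv.const_mul 2).add (hdD t ht')
  have hb4 : |derivWithin y (Icc 0 T) t - 2 * vT| ≤ (8+8/ε) * δ^2 * (1+t)^(-(1+ε)) := by
    rw [hdy.derivWithin hUD]
    have hrw : 2 * v t + D' t - 2 * vT = 2*(v t - v T) + D' t := by rw [hvT]; ring
    rw [hrw]
    have e1 : |v t - v T| ≤ δ^2/(1+ε) * (1+t)^(-(1+ε)) := by
      rw [abs_sub_comm]; exact htv t ht'
    have e2 := hbD' t ht'
    have tri : |2*(v t - v T) + D' t| ≤ 2*|v t - v T| + |D' t| := by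
      calc |2*(v t - v T) + D' t| ≤ |2*(v t - v T)| + |D' t| := abs_add_le _ _
        _ = 2*|v t - v T| + |D' t| := by rw [abs_mul, abs_two]
    have s1 : δ^2/(1+ε) * (1+t)^(-(1+ε)) ≤ δ^2 * (1+t)^(-(1+ε)) :=
      mul_le_mul_of_nonneg_right hK hQpos.le
    have s2 : δ^2 * (1+t)^(-(2+ε)) ≤ δ^2 * (1+t)^(-(1+ε)) :=
      mul_le_mul_of_nonneg_left hRQ hδ2
    have hfin : 2*(δ^2 * (1+t)^(-(1+ε))) + δ^2 * (1+t)^(-(1+ε))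
        ≤ (8+8/ε) * δ^2 * (1+t)^(-(1+ε)) := by
      have h3 : (0:ℝ) ≤ 8/ε := (div_pos (by norm_num) hε).le
      calc 2*(δ^2 * (1+t)^(-(1+ε))) + δ^2 * (1+t)^(-(1+ε))
          = 3 * (δ^2 * (1+t)^(-(1+ε))) := by ring
        _ ≤ (8+8/ε) * (δ^2 * (1+t)^(-(1+ε))) :=
            mul_le_mul_of_nonneg_right (by linarith) (mul_nonneg hδ2 hQpos.le)
        _ = (8+8/ε) * δ^2 * (1+t)^(-(1+ε)) := by ring
    linarith
  -- ===== Bound 3 : derivative of ρ =====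
  have haff : HasDerivAt (fun s : ℝ => x + (2*s*vT + DT)) (2*1*vT) t :=
    ((((hasDerivAt_id t).const_mul 2).mul_const vT).add_const DT).const_add x
  have haffW := haff.hasDerivWithinAt (s := Icc 0 T)
  have hterm1 : HasDerivWithinAt (fun s => v s * (x + (2*s*vT + DT)))
      (v' t * (x + (2*t*vT + DT)) + v t * (2*1*vT)) (Icc 0 T) t :=
    (hdv t ht').mul haffW
  have hlin : HasDerivWithinAt
      (fun s => vT * (x + (2*s*vT + DT)) - s * (vT^2 - αT^2) + γT)
      (vT*(2*1*vT) - 1*(vT^2 - αT^2)) (Icc 0 T) t :=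
    ((haffW.const_mul vT).sub
      ((hasDerivAt_id t).hasDerivWithinAt.mul_const (vT^2 - αT^2))).add_const γT
  have hbig : HasDerivWithinAt (fun s => ρ s x)
      (v' t * (x + (2*t*vT + DT)) + v t * (2*1*vT) - (v t ^2 - α t ^2) + γ' t
        - (vT*(2*1*vT) - 1*(vT^2 - αT^2))) (Icc 0 T) t :=
    ((hterm1.sub hFTCg).add (hdγ t ht')).sub hlin
  have hb3 : |derivWithin (fun s => ρ s x) (Icc 0 T) t|
      ≤ (8+8/ε) * δ^2 * (1+|x|) * (1+t)^(-(1+ε)) := by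
    rw [hbig.derivWithin hUD]
    have hE0 : v' t * (x + (2*t*vT + DT)) + v t * (2*1*vT) - (v t ^2 - α t ^2) + γ' t
        - (vT*(2*1*vT) - 1*(vT^2 - αT^2))
        = v' t * (x + yT t) + γ' t + (-(v t - v T)^2 + (α t ^2 - α T ^2)) := by
      rw [hyTdef, hvT, hαT]; ring
    rw [hE0]
    have e1 : |v' t| ≤ δ^2 * (1+t)^(-(2+ε)) := hbv' t ht'
    have e2 : |γ' t| ≤ δ^2 * (1+t)^(-(2+ε)) := hbγ' t ht'
    have e3 : (v t - v T)^2 ≤ δ^2 * (1+t)^(-(1+ε)) := by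
      have h1 : |v t - v T| ≤ δ^2/(1+ε) * (1+t)^(-(1+ε)) := by
        rw [abs_sub_comm]; exact htv t ht'
      have h2 : δ^2/(1+ε) * (1+t)^(-(1+ε)) ≤ 1 := by
        calc δ^2/(1+ε) * (1+t)^(-(1+ε)) ≤ 1 * 1 :=
              mul_le_mul hK1 hQ1 hQpos.le (by norm_num)
          _ = 1 := by ring
      have h3 : δ^2/(1+ε) * (1+t)^(-(1+ε)) ≤ δ^2 * (1+t)^(-(1+ε)) :=
        mul_le_mul_of_nonneg_right hK hQpos.le
      calc (v t - v T)^2 = |v t - v T| * |v t - v T| := by rw [← sq_abs]; ring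
        _ ≤ (δ^2/(1+ε) * (1+t)^(-(1+ε))) * 1 :=
            mul_le_mul h1 (h1.trans h2) (abs_nonneg _) (mul_nonneg hK0 hQpos.le)
        _ = δ^2/(1+ε) * (1+t)^(-(1+ε)) := by ring
        _ ≤ δ^2 * (1+t)^(-(1+ε)) := h3
    have e4 : |α t ^2 - α T ^2| ≤ 2 * (δ^2 * (1+t)^(-(1+ε))) := by
      have h1 : |α t - α T| ≤ δ^2/(1+ε) * (1+t)^(-(1+ε)) := by
        rw [abs_sub_comm]; exact htα t ht'
      have h2 : |α t + α T| ≤ 2 := by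
        have := hα1 t ht'; have := hα1 T hTmem
        calc |α t + α T| ≤ |α t| + |α T| := abs_add_le _ _
          _ ≤ 2 := by linarith
      have h3 : δ^2/(1+ε) * (1+t)^(-(1+ε)) ≤ δ^2 * (1+t)^(-(1+ε)) :=
        mul_le_mul_of_nonneg_right hK hQpos.le
      calc |α t ^2 - α T ^2| = |α t - α T| * |α t + α T| := by
            rw [← abs_mul]; congr 1; ring
        _ ≤ (δ^2/(1+ε) * (1+t)^(-(1+ε))) * 2 :=
            mul_le_mul h1 h2 (abs_nonneg _) (mul_nonneg hK0 hQpos.le)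
        _ ≤ 2 * (δ^2 * (1+t)^(-(1+ε))) := by linarith [h3]
    have e5 : |v' t * (x + yT t)| ≤ (3+2/ε) * δ^2 * ((1+|x|) * (1+t)^(-(1+ε))) := by
      rw [abs_mul]
      calc |v' t| * |x + yT t|
          ≤ (δ^2 * (1+t)^(-(2+ε))) * ((3+2/ε)*((1+|x|)*(1+t))) :=
            mul_le_mul e1 hxyb2 (abs_nonneg _) (mul_nonneg hδ2 hRpos.le)
        _ = (3+2/ε) * δ^2 * ((1+|x|) * ((1+t) * (1+t)^(-(2+ε)))) := by ring
        _ = (3+2/ε) * δ^2 * ((1+|x|) * (1+t)^(-(1+ε))) := by rw [← htR]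
    have tri : |v' t * (x + yT t) + γ' t + (-(v t - v T)^2 + (α t ^2 - α T ^2))|
        ≤ |v' t * (x + yT t)| + |γ' t| + (v t - v T)^2 + |α t ^2 - α T ^2| := by
      have h1 := abs_add_le (v' t * (x + yT t) + γ' t) (-(v t - v T)^2 + (α t ^2 - α T ^2))
      have h2 := abs_add_le (v' t * (x + yT t)) (γ' t)
      have h3 := abs_add_le (-(v t - v T)^2) (α t ^2 - α T ^2)
      have h4 : |(-(v t - v T)^2 : ℝ)| = (v t - v T)^2 := by
        rw [abs_neg, abs_of_nonneg (sq_nonneg _)]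
      linarith
    have hQX : (0:ℝ) ≤ (1+|x|) * (1+t)^(-(1+ε)) := by positivity
    have s2' : |γ' t| ≤ δ^2 * ((1+|x|) * (1+t)^(-(1+ε))) := by
      refine e2.trans ?_
      calc δ^2 * (1+t)^(-(2+ε)) ≤ δ^2 * (1+t)^(-(1+ε)) :=
            mul_le_mul_of_nonneg_left hRQ hδ2
        _ = δ^2 * (1 * (1+t)^(-(1+ε))) := by ring
        _ ≤ δ^2 * ((1+|x|) * (1+t)^(-(1+ε))) :=
            mul_le_mul_of_nonneg_left
              (mul_le_mul_of_nonneg_right hX1 hQpos.le) hδ2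
    have e3' : (v t - v T)^2 ≤ δ^2 * ((1+|x|) * (1+t)^(-(1+ε))) := by
      refine e3.trans ?_
      calc δ^2 * (1+t)^(-(1+ε)) = δ^2 * (1 * (1+t)^(-(1+ε))) := by ring
        _ ≤ δ^2 * ((1+|x|) * (1+t)^(-(1+ε))) :=
            mul_le_mul_of_nonneg_left
              (mul_le_mul_of_nonneg_right hX1 hQpos.le) hδ2
    have e4' : |α t ^2 - α T ^2| ≤ 2 * (δ^2 * ((1+|x|) * (1+t)^(-(1+ε)))) := by
      refine e4.trans ?_
      have : δ^2 * (1+t)^(-(1+ε)) ≤ δ^2 * ((1+|x|) * (1+t)^(-(1+ε))) := by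
        calc δ^2 * (1+t)^(-(1+ε)) = δ^2 * (1 * (1+t)^(-(1+ε))) := by ring
          _ ≤ δ^2 * ((1+|x|) * (1+t)^(-(1+ε))) :=
              mul_le_mul_of_nonneg_left
                (mul_le_mul_of_nonneg_right hX1 hQpos.le) hδ2
      linarith
    have hfin : (3+2/ε) * δ^2 * ((1+|x|) * (1+t)^(-(1+ε)))
        + δ^2 * ((1+|x|) * (1+t)^(-(1+ε)))
        + δ^2 * ((1+|x|) * (1+t)^(-(1+ε)))
        + 2 * (δ^2 * ((1+|x|) * (1+t)^(-(1+ε))))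
        ≤ (8+8/ε) * δ^2 * (1+|x|) * (1+t)^(-(1+ε)) := by
      have h68 : (3+2/ε) + 1 + 1 + 2 ≤ 8+8/ε := by
        have : 2/ε ≤ 8/ε := (div_le_div_iff_of_pos_right hε).mpr (by norm_num)
        linarith
      calc (3+2/ε) * δ^2 * ((1+|x|) * (1+t)^(-(1+ε)))
          + δ^2 * ((1+|x|) * (1+t)^(-(1+ε)))
          + δ^2 * ((1+|x|) * (1+t)^(-(1+ε)))
          + 2 * (δ^2 * ((1+|x|) * (1+t)^(-(1+ε))))
          = ((3+2/ε) + 1 + 1 + 2) * (δ^2 * ((1+|x|) * (1+t)^(-(1+ε)))) := by ring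
        _ ≤ (8+8/ε) * (δ^2 * ((1+|x|) * (1+t)^(-(1+ε)))) :=
            mul_le_mul_of_nonneg_right h68 (mul_nonneg hδ2 hQX)
        _ = (8+8/ε) * δ^2 * (1+|x|) * (1+t)^(-(1+ε)) := by ring
    linarith
  exact ⟨hb1, hb2, hb3, hb4⟩
end
end

section
/- Let σ ≥ 1. There is a constant C depending only on σ such that for all z ∈ ℂ and all w ∈ ℂ with w ≠ 0: |F(z,w)| ≤ C(|z|^(2σ+1) + |z|²|w|^(2σ−1)). Moreover, if z, w : ℝ → ℂ are differentiable with w(x) ≠ 0 for all x, then |d/dx F(z(x), w(x))| ≤ C(|z(x)|^(2σ) + |z(x)||w(x)|^(2σ−1))|z'(x)| + C(|z(x)|^(2σ+1)|w(x)|^(−1) + |z(x)|²|w(x)|^(2σ−2))|w'(x)| for all x. -/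
noncomputable section

open Real Complex
set_option maxHeartbeats 1000000

/-- The nonlinear remainder of the NLS nonlinearity after linearization about `w`:
`F(z,w) = −|z+w|^(2σ)(z+w) + |w|^(2σ)w + (σ+1)|w|^(2σ)z + σ|w|^(2σ−2)w² conj(z)`. -/
def Fnl (σ : ℝ) (z w : ℂ) : ℂ :=
  -((‖z + w‖ ^ (2 * σ) : ℝ) : ℂ) * (z + w)
    + ((‖w‖ ^ (2 * σ) : ℝ) : ℂ) * w
    + ((σ : ℂ) + 1) * ((‖w‖ ^ (2 * σ) : ℝ) : ℂ) * z
    + (σ : ℂ) * ((‖w‖ ^ (2 * σ - 2) : ℝ) : ℂ) * w ^ 2 * starRingEnd ℂ z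


def Lm (a b : ℂ) : ℂ →L[ℝ] ℂ :=
  a • (ContinuousLinearMap.id ℝ ℂ) + b • (Complex.conjCLE : ℂ ≃L[ℝ] ℂ).toContinuousLinearMap

@[simp] lemma Lm_apply (a b h : ℂ) : Lm a b h = a * h + b * (starRingEnd ℂ h) := by
  simp [Lm, Complex.conjCLE_apply, smul_eq_mul]

lemma hasFDerivAt_normSq (u : ℂ) :
    HasFDerivAt (fun v : ℂ => Complex.normSq v)
      ((2*u.re) • Complex.reCLM + (2*u.im) • Complex.imCLM) u := by
  have h : ∀ v : ℂ, Complex.normSq v = Complex.reCLM v * Complex.reCLM v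
      + Complex.imCLM v * Complex.imCLM v := fun v => by
    simp [Complex.normSq_apply]
  simp only [funext h]
  have h1 := (Complex.reCLM.hasFDerivAt (x := u)).mul (Complex.reCLM.hasFDerivAt (x := u))
  have h2 := (Complex.imCLM.hasFDerivAt (x := u)).mul (Complex.imCLM.hasFDerivAt (x := u))
  refine (h1.add h2).congr_fderiv ?_
  ext k
  simp
  ring

lemma hasFDerivAt_nq (q : ℝ) {u : ℂ} (hu : u ≠ 0) :
    HasFDerivAt (fun v : ℂ => ((‖v‖ ^ q : ℝ) : ℂ))
      (Lm ((q/2) * ((‖u‖ ^ (q-2) : ℝ) : ℂ) * (starRingEnd ℂ u))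
          ((q/2) * ((‖u‖ ^ (q-2) : ℝ) : ℂ) * u)) u := by
  have hns : (0:ℝ) < Complex.normSq u := by
    simpa [Complex.normSq_pos] using hu
  have hrw : ∀ v : ℂ, ((‖v‖ ^ q : ℝ) : ℂ) = ((Complex.normSq v ^ (q/2) : ℝ) : ℂ) := by
    intro v
    congr 1
    rw [Complex.normSq_eq_norm_sq, ← Real.rpow_natCast (‖v‖) 2,
      ← Real.rpow_mul (norm_nonneg v)]
    norm_num
    ring_nf
  simp only [funext hrw]
  have h1 : HasDerivAt (fun t : ℝ => t ^ (q/2)) ((q/2) * Complex.normSq u ^ (q/2 - 1))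
      (Complex.normSq u) := Real.hasDerivAt_rpow_const (Or.inl (ne_of_gt hns))
  have h2 := (h1.comp_hasFDerivAt u (hasFDerivAt_normSq u))
  have h3 := Complex.ofRealCLM.hasFDerivAt.comp u h2
  have hr2 : (Complex.normSq u ^ (q/2 - 1) : ℝ) = ‖u‖ ^ (q - 2) := by
    rw [Complex.normSq_eq_norm_sq, ← Real.rpow_natCast (‖u‖) 2,
      ← Real.rpow_mul (norm_nonneg u)]
    ring_nf
  rw [hr2] at h3
  refine h3.congr_fderiv ?_
  ext k
  simp [Complex.ext_iff]
  constructor <;> ring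

lemma Lm_sub (a b a' b' : ℂ) : Lm a b - Lm a' b' = Lm (a - a') (b - b') := by
  ext h; simp; ring

lemma Lm_norm_le (a b : ℂ) : ‖Lm a b‖ ≤ ‖a‖ + ‖b‖ := by
  refine ContinuousLinearMap.opNorm_le_bound _ (by positivity) fun h => ?_
  rw [Lm_apply]
  calc ‖a * h + b * (starRingEnd ℂ h)‖ ≤ ‖a * h‖ + ‖b * starRingEnd ℂ h‖ := norm_add_le _ _
  _ = (‖a‖ + ‖b‖) * ‖h‖ := by simp [norm_mul]; ring

lemma Lm_apply_norm_le (a b h : ℂ) : ‖Lm a b h‖ ≤ (‖a‖ + ‖b‖) * ‖h‖ :=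
  le_trans (ContinuousLinearMap.le_opNorm _ _) (by
    have := Lm_norm_le a b
    exact mul_le_mul_of_nonneg_right this (norm_nonneg h))

/-- basic building block -/
def Pf (c : ℂ) (q : ℝ) (n m : ℤ) (v : ℂ) : ℂ :=
  c * ((‖v‖ ^ q : ℝ) : ℂ) * v ^ n * (starRingEnd ℂ v) ^ m

lemma zpow_pred {u : ℂ} (hu : u ≠ 0) (n : ℤ) : u ^ n = u ^ (n - 1) * u := by
  rw [zpow_sub_one₀ hu]
  field_simp

lemma zpow_succ' {u : ℂ} (hu : u ≠ 0) (n : ℤ) : u ^ (n + 1) = u ^ n * u :=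
  zpow_add_one₀ hu n


lemma HasFDerivAt.lmMul {f g : ℂ → ℂ} {u a b a' b' : ℂ} (hf : HasFDerivAt f (Lm a b) u)
    (hg : HasFDerivAt g (Lm a' b') u) :
    HasFDerivAt (fun v => f v * g v)
      (Lm (f u * a' + g u * a) (f u * b' + g u * b)) u := by
  refine (hf.mul hg).congr_fderiv ?_
  ext k
  simp [smul_eq_mul]
  ring

lemma hasFDerivAt_zpow' (n : ℤ) {u : ℂ} (hu : u ≠ 0) :
    HasFDerivAt (fun v : ℂ => v ^ n) (Lm ((n : ℂ) * u ^ (n - 1)) 0) u := by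
  have h := ((hasDerivAt_zpow n u (Or.inl hu)).hasFDerivAt).restrictScalars ℝ
  refine h.congr_fderiv ?_
  ext k
  simp [smul_eq_mul]
  ring

lemma hasFDerivAt_conj_comp {f : ℂ → ℂ} {u a b : ℂ} (hf : HasFDerivAt f (Lm a b) u) :
    HasFDerivAt (fun v => starRingEnd ℂ (f v))
      (Lm (starRingEnd ℂ b) (starRingEnd ℂ a)) u := by
  have h := (Complex.conjCLE.toContinuousLinearMap.hasFDerivAt (x := f u)).comp u hf
  refine h.congr_fderiv ?_
  ext k
  simp [Complex.conjCLE_apply]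
  ring

lemma key_id (q : ℝ) {u : ℂ} (hu : u ≠ 0) :
    ((‖u‖ ^ (q - 2) : ℝ) : ℂ) * (u * starRingEnd ℂ u) = ((‖u‖ ^ q : ℝ) : ℂ) := by
  rw [Complex.mul_conj, ← Complex.ofReal_mul]
  congr 1
  rw [Complex.normSq_eq_norm_sq, ← Real.rpow_natCast ‖u‖ 2,
    ← Real.rpow_add (norm_pos_iff.2 hu)]
  norm_num

lemma hasFDerivAt_Pf (c : ℂ) (q : ℝ) (n m : ℤ) {u : ℂ} (hu : u ≠ 0) :
    HasFDerivAt (Pf c q n m)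
      (Lm (Pf (c * ((q : ℂ)/2 + (n : ℂ))) q (n - 1) m u)
          (Pf (c * ((q : ℂ)/2 + (m : ℂ))) q n (m - 1) u)) u := by
  have hcu : starRingEnd ℂ u ≠ 0 := by simpa using hu
  have h1 : HasFDerivAt (fun v : ℂ => c * ((‖v‖ ^ q : ℝ) : ℂ))
      (Lm (c * ((q/2) * ((‖u‖ ^ (q-2) : ℝ) : ℂ) * (starRingEnd ℂ u)))
          (c * ((q/2) * ((‖u‖ ^ (q-2) : ℝ) : ℂ) * u))) u := by
    have := (hasFDerivAt_nq q hu).const_mul c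
    refine this.congr_fderiv ?_
    ext k
    simp [smul_eq_mul]
    ring
  have h2 := hasFDerivAt_zpow' n hu
  have h3 : HasFDerivAt (fun v : ℂ => (starRingEnd ℂ v) ^ m)
      (Lm 0 ((m : ℂ) * (starRingEnd ℂ u) ^ (m - 1))) u := by
    have := hasFDerivAt_conj_comp (hasFDerivAt_zpow' m hu)
    convert this using 2 <;> simp [map_zpow₀]
  have h12 := h1.lmMul h2
  have h123 := h12.lmMul h3
  refine h123.congr_fderiv ?_
  symm
  have key := key_id q hu
  congr 1
  · -- a-coefficient
    simp only [Pf]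
    rw [zpow_pred hu n]
    push_cast
    linear_combination (-(c * ((q:ℂ)/2) * u ^ (n-1) * (starRingEnd ℂ u) ^ m)) * key
  · -- b-coefficient
    simp only [Pf]
    rw [zpow_pred hcu m]
    push_cast
    linear_combination (-(c * ((q:ℂ)/2) * u ^ n * (starRingEnd ℂ u) ^ (m-1))) * key

lemma Pf_norm (c : ℂ) (q : ℝ) (n m : ℤ) {u : ℂ} (hu : u ≠ 0) :
    ‖Pf c q n m u‖ = ‖c‖ * ‖u‖ ^ (q + (n : ℝ) + (m : ℝ)) := by
  have hr : (0:ℝ) < ‖u‖ := norm_pos_iff.2 hu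
  simp only [Pf, norm_mul, norm_zpow, RCLike.norm_conj]
  rw [Complex.norm_real, Real.norm_eq_abs, _root_.abs_of_nonneg (Real.rpow_nonneg (norm_nonneg u) q),
    ← Real.rpow_intCast ‖u‖ n, ← Real.rpow_intCast ‖u‖ m,
    Real.rpow_add hr, Real.rpow_add hr]
  ring

lemma ann_bound {w u : ℂ} (e : ℝ) (hw : w ≠ 0) (h1 : ‖w‖/2 ≤ ‖u‖) (h2 : ‖u‖ ≤ 2*‖w‖) :
    ‖u‖ ^ e ≤ 2 ^ |e| * ‖w‖ ^ e := by
  have hw' : (0:ℝ) < ‖w‖ := norm_pos_iff.2 hw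
  rcases le_or_gt 0 e with he | he
  · calc ‖u‖ ^ e ≤ (2*‖w‖) ^ e := Real.rpow_le_rpow (norm_nonneg u) h2 he
    _ = 2 ^ e * ‖w‖ ^ e := Real.mul_rpow (by norm_num) (norm_nonneg w)
    _ ≤ 2 ^ |e| * ‖w‖ ^ e :=
        mul_le_mul_of_nonneg_right
          (Real.rpow_le_rpow_of_exponent_le (by norm_num) (le_abs_self e))
          (Real.rpow_nonneg (norm_nonneg w) e)
  · calc ‖u‖ ^ e ≤ (‖w‖/2) ^ e :=
        Real.rpow_le_rpow_of_nonpos (by positivity) h1 he.le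
    _ = 2 ^ (-e) * ‖w‖ ^ e := by
        rw [Real.div_rpow (norm_nonneg w) (by norm_num), Real.rpow_neg (by norm_num)]
        field_simp
    _ = 2 ^ |e| * ‖w‖ ^ e := by rw [abs_of_neg he]

lemma ball_facts {w z u : ℂ} (hw : w ≠ 0) (hz : ‖z‖ ≤ ‖w‖/2)
    (hu : u ∈ Metric.closedBall w ‖z‖) :
    u ≠ 0 ∧ ‖w‖/2 ≤ ‖u‖ ∧ ‖u‖ ≤ 2*‖w‖ := by
  have hw' : (0:ℝ) < ‖w‖ := norm_pos_iff.2 hw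
  rw [Metric.mem_closedBall, dist_eq_norm] at hu
  have h1 : ‖w‖/2 ≤ ‖u‖ := by
    have := norm_sub_norm_le w u
    have h : ‖w - u‖ = ‖u - w‖ := norm_sub_rev w u
    linarith
  have h2 : ‖u‖ ≤ 2*‖w‖ := by
    have := norm_le_norm_add_norm_sub' u w
    have h : ‖w - u‖ = ‖u - w‖ := norm_sub_rev w u
    linarith
  exact ⟨norm_pos_iff.1 (by linarith), h1, h2⟩

lemma Pf_norm_eq (c : ℂ) (q : ℝ) (n m : ℤ) {u : ℂ} (hu : u ≠ 0) (e : ℝ)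
    (he : e = q + n + m) : ‖Pf c q n m u‖ = ‖c‖ * ‖u‖ ^ e := by
  rw [Pf_norm c q n m hu, he]

/-- Lipschitz estimate for `Pf` on a small ball around `w`. -/
lemma Pf_lip (c : ℂ) (q : ℝ) (n m : ℤ) :
    ∃ K : ℝ, 0 < K ∧ ∀ (w z u : ℂ), w ≠ 0 → ‖z‖ ≤ ‖w‖/2 →
      u ∈ Metric.closedBall w ‖z‖ →
      ‖Pf c q n m u - Pf c q n m w‖ ≤ K * ‖w‖ ^ (q + n + m - 1) * ‖z‖ := by
  set e : ℝ := q + n + m - 1 with hedef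
  set K : ℝ := (‖c * ((q : ℂ)/2 + (n : ℂ))‖ + ‖c * ((q : ℂ)/2 + (m : ℂ))‖) * 2 ^ |e| + 1 with hK
  have hKpos : 0 < K := by positivity
  refine ⟨K, hKpos, fun w z u hw hz hu => ?_⟩
  have hw' : (0:ℝ) < ‖w‖ := norm_pos_iff.2 hw
  set s : Set ℂ := Metric.closedBall w ‖z‖ with hs
  have hws : w ∈ s := Metric.mem_closedBall_self (norm_nonneg z)
  have hderiv : ∀ v ∈ s, HasFDerivWithinAt (Pf c q n m)
      (Lm (Pf (c * ((q : ℂ)/2 + (n : ℂ))) q (n - 1) m v)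
          (Pf (c * ((q : ℂ)/2 + (m : ℂ))) q n (m - 1) v)) s v := fun v hv =>
    (hasFDerivAt_Pf c q n m (ball_facts hw hz hv).1).hasFDerivWithinAt
  have hbound : ∀ v ∈ s, ‖Lm (Pf (c * ((q : ℂ)/2 + (n : ℂ))) q (n - 1) m v)
      (Pf (c * ((q : ℂ)/2 + (m : ℂ))) q n (m - 1) v)‖ ≤ K * ‖w‖ ^ e := by
    intro v hv
    obtain ⟨hv0, hv1, hv2⟩ := ball_facts hw hz hv
    refine le_trans (Lm_norm_le _ _) ?_
    rw [Pf_norm_eq _ q (n-1) m hv0 e (by push_cast [hedef]; ring),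
      Pf_norm_eq _ q n (m-1) hv0 e (by push_cast [hedef]; ring)]
    have hann := ann_bound e hw hv1 hv2
    have hnn : (0:ℝ) ≤ ‖c * ((q : ℂ)/2 + (n : ℂ))‖ + ‖c * ((q : ℂ)/2 + (m : ℂ))‖ := by positivity
    calc (‖c * ((q : ℂ)/2 + (n : ℂ))‖) * ‖v‖ ^ e + (‖c * ((q : ℂ)/2 + (m : ℂ))‖) * ‖v‖ ^ e
        = (‖c * ((q : ℂ)/2 + (n : ℂ))‖ + ‖c * ((q : ℂ)/2 + (m : ℂ))‖) * ‖v‖ ^ e := by ring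
      _ ≤ (‖c * ((q : ℂ)/2 + (n : ℂ))‖ + ‖c * ((q : ℂ)/2 + (m : ℂ))‖) * (2 ^ |e| * ‖w‖ ^ e) :=
          mul_le_mul_of_nonneg_left hann hnn
      _ ≤ K * ‖w‖ ^ e := by
          rw [hK]
          have : (0:ℝ) ≤ ‖w‖ ^ e := Real.rpow_nonneg (norm_nonneg w) e
          nlinarith
  have := (convex_closedBall w ‖z‖).norm_image_sub_le_of_norm_hasFDerivWithin_le
    hderiv hbound hws hu
  calc ‖Pf c q n m u - Pf c q n m w‖ ≤ K * ‖w‖ ^ e * ‖u - w‖ := this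
  _ ≤ K * ‖w‖ ^ e * ‖z‖ := by
      have : ‖u - w‖ ≤ ‖z‖ := by rwa [Metric.mem_closedBall, dist_eq_norm] at hu
      have h0 : (0:ℝ) ≤ K * ‖w‖ ^ e := by positivity
      exact mul_le_mul_of_nonneg_left this h0

/-- Taylor estimate for `Pf` near `w`. -/
lemma Pf_taylor (c : ℂ) (q : ℝ) (n m : ℤ) :
    ∃ K : ℝ, 0 < K ∧ ∀ (w z : ℂ), w ≠ 0 → ‖z‖ ≤ ‖w‖/2 →
      ‖Pf c q n m (w + z) - Pf c q n m w
        - Lm (Pf (c * ((q : ℂ)/2 + (n : ℂ))) q (n - 1) m w)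
             (Pf (c * ((q : ℂ)/2 + (m : ℂ))) q n (m - 1) w) z‖
        ≤ K * ‖w‖ ^ (q + n + m - 2) * ‖z‖ ^ 2 := by
  obtain ⟨K₁, hK₁, hlip₁⟩ := Pf_lip (c * ((q : ℂ)/2 + (n : ℂ))) q (n - 1) m
  obtain ⟨K₂, hK₂, hlip₂⟩ := Pf_lip (c * ((q : ℂ)/2 + (m : ℂ))) q n (m - 1)
  refine ⟨K₁ + K₂, by positivity, fun w z hw hz => ?_⟩
  have hw' : (0:ℝ) < ‖w‖ := norm_pos_iff.2 hw
  set s : Set ℂ := Metric.closedBall w ‖z‖ with hs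
  have hws : w ∈ s := Metric.mem_closedBall_self (norm_nonneg z)
  have hwzs : w + z ∈ s := by
    rw [Metric.mem_closedBall, dist_eq_norm]
    simp
  set φ := Lm (Pf (c * ((q : ℂ)/2 + (n : ℂ))) q (n - 1) m w)
             (Pf (c * ((q : ℂ)/2 + (m : ℂ))) q n (m - 1) w) with hφ
  have hderiv : ∀ v ∈ s, HasFDerivWithinAt (Pf c q n m)
      (Lm (Pf (c * ((q : ℂ)/2 + (n : ℂ))) q (n - 1) m v)
          (Pf (c * ((q : ℂ)/2 + (m : ℂ))) q n (m - 1) v)) s v := fun v hv =>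
    (hasFDerivAt_Pf c q n m (ball_facts hw hz hv).1).hasFDerivWithinAt
  have hbound : ∀ v ∈ s,
      ‖Lm (Pf (c * ((q : ℂ)/2 + (n : ℂ))) q (n - 1) m v)
          (Pf (c * ((q : ℂ)/2 + (m : ℂ))) q n (m - 1) v) - φ‖
        ≤ (K₁ + K₂) * ‖w‖ ^ (q + n + m - 2) * ‖z‖ := by
    intro v hv
    rw [hφ, Lm_sub]
    refine le_trans (Lm_norm_le _ _) ?_
    have h1 := hlip₁ w z v hw hz hv
    have h2 := hlip₂ w z v hw hz hv
    have he1 : q + ((n:ℝ) - 1) + (m:ℝ) - 1 = q + n + m - 2 := by ring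
    have he2 : q + (n:ℝ) + ((m:ℝ) - 1) - 1 = q + n + m - 2 := by ring
    push_cast at h1 h2
    rw [he1] at h1
    rw [he2] at h2
    calc _ ≤ K₁ * ‖w‖ ^ (q + n + m - 2) * ‖z‖ + K₂ * ‖w‖ ^ (q + n + m - 2) * ‖z‖ :=
          add_le_add h1 h2
      _ = (K₁ + K₂) * ‖w‖ ^ (q + n + m - 2) * ‖z‖ := by ring
  have hmv := (convex_closedBall w ‖z‖).norm_image_sub_le_of_norm_hasFDerivWithin_le'
    hderiv hbound hws hwzs
  simp only [add_sub_cancel_left] at hmv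
  calc ‖Pf c q n m (w + z) - Pf c q n m w - φ z‖
      ≤ (K₁ + K₂) * ‖w‖ ^ (q + n + m - 2) * ‖z‖ * ‖z‖ := hmv
    _ = (K₁ + K₂) * ‖w‖ ^ (q + n + m - 2) * ‖z‖ ^ 2 := by ring

/-! ### The specific functions for the NLS nonlinearity -/

def gA (σ : ℝ) : ℂ → ℂ := Pf ((σ:ℂ)+1) (2*σ) 0 0
def gB (σ : ℝ) : ℂ → ℂ := Pf (σ:ℂ) (2*σ) 1 (-1)
def gg (σ : ℝ) : ℂ → ℂ := Pf 1 (2*σ) 1 0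
def aA (σ : ℝ) : ℂ → ℂ := Pf ((σ:ℂ)*((σ:ℂ)+1)) (2*σ) (-1) 0
def bA (σ : ℝ) : ℂ → ℂ := Pf ((σ:ℂ)*((σ:ℂ)+1)) (2*σ) 0 (-1)
def bB (σ : ℝ) : ℂ → ℂ := Pf ((σ:ℂ)*((σ:ℂ)-1)) (2*σ) 1 (-2)

lemma Pf_congr {c c' : ℂ} (q : ℝ) {n n' m m' : ℤ} (hc : c = c') (hn : n = n') (hm : m = m') :
    Pf c q n m = Pf c' q n' m' := by rw [hc, hn, hm]

lemma hasFDerivAt_gg (σ : ℝ) {u : ℂ} (hu : u ≠ 0) :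
    HasFDerivAt (gg σ) (Lm (gA σ u) (gB σ u)) u := by
  have h := hasFDerivAt_Pf 1 (2*σ) 1 0 hu
  have e1 : Pf (1 * (((2*σ:ℝ) : ℂ)/2 + ((1:ℤ) : ℂ))) (2*σ) (1-1) 0 = gA σ := by
    apply Pf_congr <;> push_cast <;> ring
  have e2 : Pf (1 * (((2*σ:ℝ) : ℂ)/2 + ((0:ℤ) : ℂ))) (2*σ) 1 (0-1) = gB σ := by
    apply Pf_congr <;> push_cast <;> ring
  rw [e1, e2] at h
  exact h

lemma hasFDerivAt_gA (σ : ℝ) {u : ℂ} (hu : u ≠ 0) :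
    HasFDerivAt (gA σ) (Lm (aA σ u) (bA σ u)) u := by
  have h := hasFDerivAt_Pf ((σ:ℂ)+1) (2*σ) 0 0 hu
  have e1 : Pf (((σ:ℂ)+1) * (((2*σ:ℝ) : ℂ)/2 + ((0:ℤ) : ℂ))) (2*σ) (0-1) 0 = aA σ := by
    apply Pf_congr <;> push_cast <;> ring
  have e2 : Pf (((σ:ℂ)+1) * (((2*σ:ℝ) : ℂ)/2 + ((0:ℤ) : ℂ))) (2*σ) 0 (0-1) = bA σ := by
    apply Pf_congr <;> push_cast <;> ring
  rw [e1, e2] at h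
  exact h

lemma hasFDerivAt_gB (σ : ℝ) {u : ℂ} (hu : u ≠ 0) :
    HasFDerivAt (gB σ) (Lm (bA σ u) (bB σ u)) u := by
  have h := hasFDerivAt_Pf (σ:ℂ) (2*σ) 1 (-1) hu
  have e1 : Pf ((σ:ℂ) * (((2*σ:ℝ) : ℂ)/2 + ((1:ℤ) : ℂ))) (2*σ) (1-1) (-1) = bA σ := by
    apply Pf_congr <;> push_cast <;> ring
  have e2 : Pf ((σ:ℂ) * (((2*σ:ℝ) : ℂ)/2 + ((-1:ℤ) : ℂ))) (2*σ) 1 (-1-1) = bB σ := by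
    apply Pf_congr <;> push_cast <;> ring
  rw [e1, e2] at h
  exact h

lemma gA_zero (σ : ℝ) (hσ : 1 ≤ σ) : gA σ 0 = 0 := by
  simp [gA, Pf, Real.zero_rpow (by positivity : 2*σ ≠ 0)]

lemma gB_zero (σ : ℝ) : gB σ 0 = 0 := by
  simp [gB, Pf]

lemma gg_zero (σ : ℝ) : gg σ 0 = 0 := by
  simp [gg, Pf]

lemma hasFDerivAt_gg_zero (σ : ℝ) (hσ : 1 ≤ σ) :
    HasFDerivAt (gg σ) (Lm (gA σ 0) (gB σ 0)) 0 := by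
  have hLm : Lm (gA σ 0) (gB σ 0) = 0 := by
    rw [gA_zero σ hσ, gB_zero σ]
    ext k; simp
  rw [hLm]
  rw [hasFDerivAt_iff_isLittleO_nhds_zero]
  have htend : Filter.Tendsto (fun h : ℂ => ‖h‖ ^ (2*σ)) (nhds 0) (nhds 0) := by
    have h1 : ContinuousAt (fun t : ℝ => t ^ (2*σ)) 0 :=
      Real.continuousAt_rpow_const 0 (2*σ) (Or.inr (by positivity))
    have h2 : Filter.Tendsto (fun h : ℂ => ‖h‖) (nhds 0) (nhds 0) := by
      simpa using (continuous_norm (E := ℂ)).tendsto 0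
    have := h1.tendsto.comp h2
    simpa [Function.comp_def, Real.zero_rpow (by positivity : 2*σ ≠ 0)] using this
  rw [Asymptotics.isLittleO_iff]
  intro ε hε
  filter_upwards [htend.eventually_le_const hε] with h hh
  have hgg : gg σ (0 + h) - gg σ 0 - (0 : ℂ →L[ℝ] ℂ) h = ((‖h‖ ^ (2*σ) : ℝ) : ℂ) * h := by
    simp [gg, Pf]
  rw [hgg]
  rw [norm_mul, Complex.norm_real, Real.norm_eq_abs,
    _root_.abs_of_nonneg (Real.rpow_nonneg (norm_nonneg h) _)]
  exact mul_le_mul_of_nonneg_right hh (norm_nonneg h)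

lemma hasFDerivAt_gg_all (σ : ℝ) (hσ : 1 ≤ σ) (u : ℂ) :
    HasFDerivAt (gg σ) (Lm (gA σ u) (gB σ u)) u := by
  rcases eq_or_ne u 0 with rfl | hu
  · exact hasFDerivAt_gg_zero σ hσ
  · exact hasFDerivAt_gg σ hu

lemma gB_eq (σ : ℝ) {w : ℂ} (hw : w ≠ 0) :
    gB σ w = (σ : ℂ) * ((‖w‖ ^ (2*σ - 2) : ℝ) : ℂ) * w ^ 2 := by
  have hcw : starRingEnd ℂ w ≠ 0 := by simpa using hw
  have key := key_id (2*σ) hw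
  simp only [gB, Pf, zpow_one, zpow_neg_one]
  have h2 : (σ:ℂ) * ((‖w‖^(2*σ):ℝ):ℂ) * w * (starRingEnd ℂ w)⁻¹
      = ((σ:ℂ) * ((‖w‖^(2*σ):ℝ):ℂ) * w) / (starRingEnd ℂ w) := by ring
  rw [h2, div_eq_iff hcw]
  linear_combination (-(σ:ℂ) * w) * key

lemma Fnl_eq (σ : ℝ) {w : ℂ} (hw : w ≠ 0) (z : ℂ) :
    Fnl σ z w = -(gg σ (z + w) - gg σ w - Lm (gA σ w) (gB σ w) z) := by
  rw [Lm_apply, gB_eq σ hw]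
  simp only [Fnl, gg, gA, Pf, zpow_one, zpow_zero]
  push_cast
  ring

lemma norm_ofReal_add_one (σ : ℝ) (hσ : 0 ≤ σ) : ‖((σ:ℂ)+1)‖ = σ + 1 := by
  rw [show ((σ:ℂ)+1) = ((σ+1 : ℝ) : ℂ) by push_cast; ring, Complex.norm_real,
    Real.norm_eq_abs, _root_.abs_of_nonneg (by linarith)]

lemma norm_ofReal_nonneg' (σ : ℝ) (hσ : 0 ≤ σ) : ‖((σ:ℂ))‖ = σ := by
  rw [Complex.norm_real, Real.norm_eq_abs, _root_.abs_of_nonneg hσ]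

lemma norm_gA_le (σ : ℝ) (hσ : 1 ≤ σ) (u : ℂ) : ‖gA σ u‖ ≤ (σ+1) * ‖u‖ ^ (2*σ) := by
  rcases eq_or_ne u 0 with rfl | hu
  · rw [gA_zero σ hσ]
    simp
    positivity
  · rw [gA, Pf_norm_eq _ _ _ _ hu (2*σ) (by push_cast; ring), norm_ofReal_add_one σ (by linarith)]

lemma norm_gB_le (σ : ℝ) (hσ : 1 ≤ σ) (u : ℂ) : ‖gB σ u‖ ≤ σ * ‖u‖ ^ (2*σ) := by
  rcases eq_or_ne u 0 with rfl | hu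
  · rw [gB_zero σ]
    simp
    positivity
  · rw [gB, Pf_norm_eq _ _ _ _ hu (2*σ) (by push_cast; ring), norm_ofReal_nonneg' σ (by linarith)]

lemma norm_gg_le (σ : ℝ) (hσ : 1 ≤ σ) (u : ℂ) : ‖gg σ u‖ ≤ ‖u‖ ^ (2*σ+1) := by
  rcases eq_or_ne u 0 with rfl | hu
  · rw [gg_zero σ]
    simp
    positivity
  · rw [gg, Pf_norm_eq _ _ _ _ hu (2*σ+1) (by push_cast; ring)]
    simp

lemma norm_aA_le (σ : ℝ) (hσ : 1 ≤ σ) {u : ℂ} (hu : u ≠ 0) :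
    ‖aA σ u‖ ≤ σ*(σ+1) * ‖u‖ ^ (2*σ-1) := by
  rw [aA, Pf_norm_eq _ _ _ _ hu (2*σ-1) (by push_cast; ring)]
  have : ‖(σ:ℂ)*((σ:ℂ)+1)‖ = σ*(σ+1) := by
    rw [norm_mul, norm_ofReal_nonneg' σ (by linarith), norm_ofReal_add_one σ (by linarith)]
  rw [this]

lemma norm_bA_le (σ : ℝ) (hσ : 1 ≤ σ) {u : ℂ} (hu : u ≠ 0) :
    ‖bA σ u‖ ≤ σ*(σ+1) * ‖u‖ ^ (2*σ-1) := by
  rw [bA, Pf_norm_eq _ _ _ _ hu (2*σ-1) (by push_cast; ring)]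
  have : ‖(σ:ℂ)*((σ:ℂ)+1)‖ = σ*(σ+1) := by
    rw [norm_mul, norm_ofReal_nonneg' σ (by linarith), norm_ofReal_add_one σ (by linarith)]
  rw [this]

lemma norm_bB_le (σ : ℝ) (hσ : 1 ≤ σ) {u : ℂ} (hu : u ≠ 0) :
    ‖bB σ u‖ ≤ σ*(σ+1) * ‖u‖ ^ (2*σ-1) := by
  rw [bB, Pf_norm_eq _ _ _ _ hu (2*σ-1) (by push_cast; ring)]
  have h : ‖(σ:ℂ)*((σ:ℂ)-1)‖ = σ*(σ-1) := by
    rw [norm_mul, norm_ofReal_nonneg' σ (by linarith),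
      show ((σ:ℂ)-1) = ((σ-1 : ℝ) : ℂ) by push_cast; ring, Complex.norm_real,
      Real.norm_eq_abs, _root_.abs_of_nonneg (by linarith)]
  rw [h]
  have : (0:ℝ) ≤ ‖u‖ ^ (2*σ-1) := Real.rpow_nonneg (norm_nonneg u) _
  nlinarith

lemma rpow_split1 {x : ℝ} (hx : 0 < x) (e : ℝ) : x ^ e = x ^ (e-1) * x := by
  have h := Real.rpow_add hx (e-1) 1
  rw [Real.rpow_one] at h
  rw [← h]
  ring_nf

lemma rpow_split2 {x : ℝ} (hx : 0 < x) (e : ℝ) : x ^ e = x ^ (e-2) * x^(2:ℕ) := by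
  rw [show x ^ (2:ℕ) = x ^ ((2:ℕ):ℝ) from (Real.rpow_natCast x 2).symm, ← Real.rpow_add hx]
  norm_num

lemma combo {a t₁ t₂ c₁ c₂ C : ℝ} (h : a ≤ c₁*t₁ + c₂*t₂) (h1 : 0 ≤ t₁) (h2 : 0 ≤ t₂)
    (hc1 : c₁ ≤ C) (hc2 : c₂ ≤ C) : a ≤ C*(t₁+t₂) := by nlinarith

/-- Facts in the "far" regime `‖w‖/2 < ‖z‖`. -/
lemma far_facts {z w : ℂ} (hw : w ≠ 0) (hfar : ‖w‖/2 < ‖z‖) (e : ℝ) (he : 0 ≤ e) :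
    ‖z+w‖ ^ e ≤ 3^e * ‖z‖ ^ e ∧ ‖w‖^(2:ℕ) ≤ 4 * ‖z‖^(2:ℕ) ∧ ‖w‖ ≤ 2*‖z‖ := by
  have hw' : (0:ℝ) < ‖w‖ := norm_pos_iff.2 hw
  have hzw : ‖w‖ ≤ 2*‖z‖ := by linarith
  constructor
  · have h3 : ‖z+w‖ ≤ 3*‖z‖ := by
      have := norm_add_le z w
      linarith
    calc ‖z+w‖ ^ e ≤ (3*‖z‖) ^ e := Real.rpow_le_rpow (norm_nonneg _) h3 he
    _ = 3^e * ‖z‖^e := Real.mul_rpow (by norm_num) (norm_nonneg z)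
  · refine ⟨?_, hzw⟩
    nlinarith [norm_nonneg z, norm_nonneg w]

lemma E3 (σ : ℝ) (hσ : 1 ≤ σ) :
    ∃ C : ℝ, 0 < C ∧ ∀ z w : ℂ, w ≠ 0 →
      ‖gg σ (z+w) - gg σ w - Lm (gA σ w) (gB σ w) z‖
        ≤ C * (‖z‖ ^ (2*σ+1) + ‖z‖^(2:ℕ) * ‖w‖ ^ (2*σ-1)) := by
  obtain ⟨K, hK, htay⟩ := Pf_taylor 1 (2*σ) 1 0
  have h3 : (0:ℝ) < 3^(2*σ+1) := Real.rpow_pos_of_pos (by norm_num) _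
  refine ⟨K + 3^(2*σ+1) + 4 + 2*(2*σ+1) + 1, by positivity, fun z w hw => ?_⟩
  have hw' : (0:ℝ) < ‖w‖ := norm_pos_iff.2 hw
  have ht₁ : (0:ℝ) ≤ ‖z‖ ^ (2*σ+1) := Real.rpow_nonneg (norm_nonneg z) _
  have ht₂ : (0:ℝ) ≤ ‖z‖^(2:ℕ) * ‖w‖ ^ (2*σ-1) := by positivity
  have hKp : (0:ℝ) ≤ K := hK.le
  rcases le_or_gt ‖z‖ (‖w‖/2) with hz | hz
  · have h := htay w z hw hz
    have e1 : Pf (1 * (((2*σ:ℝ) : ℂ)/2 + ((1:ℤ) : ℂ))) (2*σ) (1-1) 0 = gA σ := by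
      apply Pf_congr <;> push_cast <;> ring
    have e2 : Pf (1 * (((2*σ:ℝ) : ℂ)/2 + ((0:ℤ) : ℂ))) (2*σ) 1 (0-1) = gB σ := by
      apply Pf_congr <;> push_cast <;> ring
    have he : (2*σ + ((1:ℤ):ℝ) + ((0:ℤ):ℝ) - 2) = 2*σ-1 := by push_cast; ring
    rw [e1, e2, he, add_comm w z] at h
    have heq : K * ‖w‖ ^ (2*σ-1) * ‖z‖ ^ 2 = K * (‖z‖^(2:ℕ) * ‖w‖ ^ (2*σ-1)) := by ring
    rw [heq] at h
    calc ‖gg σ (z+w) - gg σ w - Lm (gA σ w) (gB σ w) z‖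
        ≤ K * (‖z‖^(2:ℕ) * ‖w‖ ^ (2*σ-1)) := h
      _ ≤ (K + 3^(2*σ+1) + 4 + 2*(2*σ+1) + 1) * (‖z‖ ^ (2*σ+1) + ‖z‖^(2:ℕ) * ‖w‖ ^ (2*σ-1)) := by
          nlinarith [mul_nonneg (by linarith : (0:ℝ) ≤ 3^(2*σ+1) + 4 + 2*(2*σ+1) + 1) ht₂]
  · obtain ⟨f1, f2, f3⟩ := far_facts hw hz (2*σ+1) (by linarith)
    have h0 : ‖gg σ (z+w) - gg σ w - Lm (gA σ w) (gB σ w) z‖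
        ≤ ‖gg σ (z+w)‖ + ‖gg σ w‖ + ‖Lm (gA σ w) (gB σ w) z‖ := by
      calc ‖gg σ (z+w) - gg σ w - Lm (gA σ w) (gB σ w) z‖
          ≤ ‖gg σ (z+w) - gg σ w‖ + ‖Lm (gA σ w) (gB σ w) z‖ := norm_sub_le _ _
        _ ≤ ‖gg σ (z+w)‖ + ‖gg σ w‖ + ‖Lm (gA σ w) (gB σ w) z‖ := by
            have := norm_sub_le (gg σ (z+w)) (gg σ w)
            linarith
    have b1 : ‖gg σ (z+w)‖ ≤ 3^(2*σ+1) * ‖z‖ ^ (2*σ+1) :=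
      le_trans (norm_gg_le σ hσ (z+w)) f1
    have hsplit2 : ‖w‖ ^ (2*σ+1) = ‖w‖ ^ (2*σ-1) * ‖w‖^(2:ℕ) := by
      rw [rpow_split2 hw' (2*σ+1), show 2*σ+1-2 = 2*σ-1 by ring]
    have b2 : ‖gg σ w‖ ≤ 4 * (‖z‖^(2:ℕ) * ‖w‖ ^ (2*σ-1)) := by
      refine le_trans (norm_gg_le σ hσ w) ?_
      rw [hsplit2]
      have hr : (0:ℝ) ≤ ‖w‖ ^ (2*σ-1) := Real.rpow_nonneg (norm_nonneg w) _
      nlinarith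
    have hsplit1 : ‖w‖ ^ (2*σ) = ‖w‖ ^ (2*σ-1) * ‖w‖ := by
      rw [rpow_split1 hw' (2*σ), show 2*σ-1 = 2*σ-1 by ring]
    have b3 : ‖Lm (gA σ w) (gB σ w) z‖ ≤ 2*(2*σ+1) * (‖z‖^(2:ℕ) * ‖w‖ ^ (2*σ-1)) := by
      refine le_trans (Lm_apply_norm_le _ _ _) ?_
      have hA := norm_gA_le σ hσ w
      have hB := norm_gB_le σ hσ w
      have hr : (0:ℝ) ≤ ‖w‖ ^ (2*σ-1) := Real.rpow_nonneg (norm_nonneg w) _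
      have hsum : ‖gA σ w‖ + ‖gB σ w‖ ≤ (2*σ+1) * (‖w‖ ^ (2*σ-1) * ‖w‖) := by
        rw [← hsplit1]
        nlinarith [Real.rpow_nonneg (norm_nonneg w) (2*σ)]
      have hzn : (0:ℝ) ≤ ‖z‖ := norm_nonneg z
      calc (‖gA σ w‖ + ‖gB σ w‖) * ‖z‖ ≤ ((2*σ+1) * (‖w‖ ^ (2*σ-1) * ‖w‖)) * ‖z‖ := by
            apply mul_le_mul_of_nonneg_right hsum hzn
        _ ≤ 2*(2*σ+1) * (‖z‖^(2:ℕ) * ‖w‖ ^ (2*σ-1)) := by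
            nlinarith [mul_le_mul_of_nonneg_left (mul_le_mul_of_nonneg_right f3 hzn)
              (mul_nonneg (by linarith : (0:ℝ) ≤ 2*σ+1) hr)]
    refine combo (a := ‖gg σ (z+w) - gg σ w - Lm (gA σ w) (gB σ w) z‖) (t₁ := ‖z‖ ^ (2*σ+1))
      (t₂ := ‖z‖^(2:ℕ) * ‖w‖ ^ (2*σ-1))
      (c₁ := 3^(2*σ+1)) (c₂ := 4 + 2*(2*σ+1)) (by linarith) ht₁ ht₂ (by linarith) (by linarith)

lemma mem_ball_self_add {w z : ℂ} : w + z ∈ Metric.closedBall w ‖z‖ := by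
  rw [Metric.mem_closedBall, dist_eq_norm]
  simp

lemma E1 (σ : ℝ) (hσ : 1 ≤ σ) :
    ∃ C : ℝ, 0 < C ∧ ∀ z w : ℂ, w ≠ 0 →
      ‖gA σ (z+w) - gA σ w‖ + ‖gB σ (z+w) - gB σ w‖
        ≤ C * (‖z‖ ^ (2*σ) + ‖z‖ * ‖w‖ ^ (2*σ-1)) := by
  obtain ⟨K₁, hK₁, hlip₁⟩ := Pf_lip ((σ:ℂ)+1) (2*σ) 0 0
  obtain ⟨K₂, hK₂, hlip₂⟩ := Pf_lip (σ:ℂ) (2*σ) 1 (-1)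
  have h3 : (0:ℝ) < 3^(2*σ) := Real.rpow_pos_of_pos (by norm_num) _
  refine ⟨K₁ + K₂ + (2*σ+1) * 3^(2*σ) + 2*(2*σ+1) + 1, by positivity, fun z w hw => ?_⟩
  have hw' : (0:ℝ) < ‖w‖ := norm_pos_iff.2 hw
  have ht₁ : (0:ℝ) ≤ ‖z‖ ^ (2*σ) := Real.rpow_nonneg (norm_nonneg z) _
  have ht₂ : (0:ℝ) ≤ ‖z‖ * ‖w‖ ^ (2*σ-1) := by positivity
  have hr : (0:ℝ) ≤ ‖w‖ ^ (2*σ-1) := Real.rpow_nonneg (norm_nonneg w) _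
  have hzn : (0:ℝ) ≤ ‖z‖ := norm_nonneg z
  rcases le_or_gt ‖z‖ (‖w‖/2) with hz | hz
  · have h1 := hlip₁ w z (w+z) hw hz mem_ball_self_add
    have h2 := hlip₂ w z (w+z) hw hz mem_ball_self_add
    have he1 : (2*σ + ((0:ℤ):ℝ) + ((0:ℤ):ℝ) - 1) = 2*σ-1 := by push_cast; ring
    have he2 : (2*σ + ((1:ℤ):ℝ) + ((-1:ℤ):ℝ) - 1) = 2*σ-1 := by push_cast; ring
    rw [he1, add_comm w z] at h1
    rw [he2, add_comm w z] at h2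
    have hc : ‖gA σ (z+w) - gA σ w‖ + ‖gB σ (z+w) - gB σ w‖
        ≤ (K₁ + K₂) * (‖z‖ * ‖w‖ ^ (2*σ-1)) := by
      calc ‖gA σ (z+w) - gA σ w‖ + ‖gB σ (z+w) - gB σ w‖
          ≤ K₁ * ‖w‖ ^ (2*σ-1) * ‖z‖ + K₂ * ‖w‖ ^ (2*σ-1) * ‖z‖ := add_le_add h1 h2
        _ = (K₁ + K₂) * (‖z‖ * ‖w‖ ^ (2*σ-1)) := by ring
    refine combo (t₁ := ‖z‖ ^ (2*σ)) (t₂ := ‖z‖ * ‖w‖ ^ (2*σ-1)) (c₁ := 0) (c₂ := K₁ + K₂)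
      (by linarith) ht₁ ht₂ (by nlinarith) (by nlinarith)
  · obtain ⟨f1, f2, f3⟩ := far_facts hw hz (2*σ) (by linarith)
    have bA1 : ‖gA σ (z+w)‖ ≤ (σ+1) * (3^(2*σ) * ‖z‖ ^ (2*σ)) :=
      le_trans (norm_gA_le σ hσ (z+w)) (mul_le_mul_of_nonneg_left f1 (by linarith))
    have bB1 : ‖gB σ (z+w)‖ ≤ σ * (3^(2*σ) * ‖z‖ ^ (2*σ)) :=
      le_trans (norm_gB_le σ hσ (z+w)) (mul_le_mul_of_nonneg_left f1 (by linarith))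
    have hsplit1 : ‖w‖ ^ (2*σ) = ‖w‖ ^ (2*σ-1) * ‖w‖ := rpow_split1 hw' (2*σ)
    have hw2z : ‖w‖ ^ (2*σ) ≤ ‖w‖ ^ (2*σ-1) * (2*‖z‖) := by
      rw [hsplit1]
      exact mul_le_mul_of_nonneg_left f3 hr
    have bA2 : ‖gA σ w‖ ≤ 2*(σ+1) * (‖z‖ * ‖w‖ ^ (2*σ-1)) := by
      refine le_trans (norm_gA_le σ hσ w) ?_
      calc (σ+1) * ‖w‖ ^ (2*σ) ≤ (σ+1) * (‖w‖ ^ (2*σ-1) * (2*‖z‖)) :=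
            mul_le_mul_of_nonneg_left hw2z (by linarith)
        _ = 2*(σ+1) * (‖z‖ * ‖w‖ ^ (2*σ-1)) := by ring
    have bB2 : ‖gB σ w‖ ≤ 2*σ * (‖z‖ * ‖w‖ ^ (2*σ-1)) := by
      refine le_trans (norm_gB_le σ hσ w) ?_
      calc σ * ‖w‖ ^ (2*σ) ≤ σ * (‖w‖ ^ (2*σ-1) * (2*‖z‖)) :=
            mul_le_mul_of_nonneg_left hw2z (by linarith)
        _ = 2*σ * (‖z‖ * ‖w‖ ^ (2*σ-1)) := by ring
    have n1 := norm_sub_le (gA σ (z+w)) (gA σ w)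
    have n2 := norm_sub_le (gB σ (z+w)) (gB σ w)
    have hc : ‖gA σ (z+w) - gA σ w‖ + ‖gB σ (z+w) - gB σ w‖
        ≤ ((2*σ+1) * 3^(2*σ)) * (‖z‖ ^ (2*σ)) + (2*(2*σ+1)) * (‖z‖ * ‖w‖ ^ (2*σ-1)) := by
      calc ‖gA σ (z+w) - gA σ w‖ + ‖gB σ (z+w) - gB σ w‖
          ≤ ((σ+1) * (3^(2*σ) * ‖z‖ ^ (2*σ)) + 2*(σ+1) * (‖z‖ * ‖w‖ ^ (2*σ-1)))
            + (σ * (3^(2*σ) * ‖z‖ ^ (2*σ)) + 2*σ * (‖z‖ * ‖w‖ ^ (2*σ-1))) := by linarith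
        _ = ((2*σ+1) * 3^(2*σ)) * (‖z‖ ^ (2*σ)) + (2*(2*σ+1)) * (‖z‖ * ‖w‖ ^ (2*σ-1)) := by ring
    refine combo hc ht₁ ht₂ (by nlinarith) (by nlinarith)

lemma E2 (σ : ℝ) (hσ : 1 ≤ σ) :
    ∃ C : ℝ, 0 < C ∧ ∀ z w : ℂ, w ≠ 0 →
      ‖gA σ (z+w) - gA σ w - Lm (aA σ w) (bA σ w) z‖
        + ‖gB σ (z+w) - gB σ w - Lm (bA σ w) (bB σ w) z‖
        ≤ C * (‖z‖ ^ (2*σ+1) * ‖w‖ ^ (-(1:ℝ)) + ‖z‖^(2:ℕ) * ‖w‖ ^ (2*σ-2)) := by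
  obtain ⟨K₁, hK₁, htay₁⟩ := Pf_taylor ((σ:ℂ)+1) (2*σ) 0 0
  obtain ⟨K₂, hK₂, htay₂⟩ := Pf_taylor (σ:ℂ) (2*σ) 1 (-1)
  have h3 : (0:ℝ) < 3^(2*σ) := Real.rpow_pos_of_pos (by norm_num) _
  refine ⟨K₁ + K₂ + 2*(2*σ+1)*3^(2*σ) + 4*(2*σ+1) + 8*σ*(σ+1) + 1, by positivity,
    fun z w hw => ?_⟩
  have hw' : (0:ℝ) < ‖w‖ := norm_pos_iff.2 hw
  have ht₁ : (0:ℝ) ≤ ‖z‖ ^ (2*σ+1) * ‖w‖ ^ (-(1:ℝ)) := by positivity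
  have ht₂ : (0:ℝ) ≤ ‖z‖^(2:ℕ) * ‖w‖ ^ (2*σ-2) := by positivity
  have hr2 : (0:ℝ) ≤ ‖w‖ ^ (2*σ-2) := Real.rpow_nonneg (norm_nonneg w) _
  have hzn : (0:ℝ) ≤ ‖z‖ := norm_nonneg z
  rcases le_or_gt ‖z‖ (‖w‖/2) with hz | hz
  · have h1 := htay₁ w z hw hz
    have h2 := htay₂ w z hw hz
    have e1A : Pf (((σ:ℂ)+1) * (((2*σ:ℝ) : ℂ)/2 + ((0:ℤ) : ℂ))) (2*σ) (0-1) 0 = aA σ := by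
      apply Pf_congr <;> push_cast <;> ring
    have e2A : Pf (((σ:ℂ)+1) * (((2*σ:ℝ) : ℂ)/2 + ((0:ℤ) : ℂ))) (2*σ) 0 (0-1) = bA σ := by
      apply Pf_congr <;> push_cast <;> ring
    have e1B : Pf ((σ:ℂ) * (((2*σ:ℝ) : ℂ)/2 + ((1:ℤ) : ℂ))) (2*σ) (1-1) (-1) = bA σ := by
      apply Pf_congr <;> push_cast <;> ring
    have e2B : Pf ((σ:ℂ) * (((2*σ:ℝ) : ℂ)/2 + ((-1:ℤ) : ℂ))) (2*σ) 1 (-1-1) = bB σ := by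
      apply Pf_congr <;> push_cast <;> ring
    have heA : (2*σ + ((0:ℤ):ℝ) + ((0:ℤ):ℝ) - 2) = 2*σ-2 := by push_cast; ring
    have heB : (2*σ + ((1:ℤ):ℝ) + ((-1:ℤ):ℝ) - 2) = 2*σ-2 := by push_cast; ring
    rw [e1A, e2A, heA, add_comm w z] at h1
    rw [e1B, e2B, heB, add_comm w z] at h2
    have hc : ‖gA σ (z+w) - gA σ w - Lm (aA σ w) (bA σ w) z‖
        + ‖gB σ (z+w) - gB σ w - Lm (bA σ w) (bB σ w) z‖
        ≤ (K₁ + K₂) * (‖z‖^(2:ℕ) * ‖w‖ ^ (2*σ-2)) := by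
      calc ‖gA σ (z+w) - gA σ w - Lm (aA σ w) (bA σ w) z‖
          + ‖gB σ (z+w) - gB σ w - Lm (bA σ w) (bB σ w) z‖
          ≤ K₁ * ‖w‖ ^ (2*σ-2) * ‖z‖^(2:ℕ) + K₂ * ‖w‖ ^ (2*σ-2) * ‖z‖^(2:ℕ) := add_le_add h1 h2
        _ = (K₁ + K₂) * (‖z‖^(2:ℕ) * ‖w‖ ^ (2*σ-2)) := by ring
    refine combo (t₁ := ‖z‖ ^ (2*σ+1) * ‖w‖ ^ (-(1:ℝ))) (t₂ := ‖z‖^(2:ℕ) * ‖w‖ ^ (2*σ-2))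
      (c₁ := 0) (c₂ := K₁ + K₂) (by linarith) ht₁ ht₂ (by nlinarith) (by nlinarith)
  · have hz' : (0:ℝ) < ‖z‖ := lt_trans (by positivity) hz
    obtain ⟨f1, f2, f3⟩ := far_facts hw hz (2*σ) (by linarith)
    have hinv : ‖w‖ ^ (-(1:ℝ)) = ‖w‖⁻¹ := by
      rw [show (-(1:ℝ)) = ((-1 : ℤ):ℝ) by norm_num, Real.rpow_intCast, zpow_neg_one]
    have key1 : ‖z‖ ^ (2*σ) ≤ 2 * (‖z‖ ^ (2*σ+1) * ‖w‖ ^ (-(1:ℝ))) := by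
      have hsp : ‖z‖ ^ (2*σ+1) = ‖z‖ ^ (2*σ) * ‖z‖ := by
        rw [rpow_split1 hz' (2*σ+1), show 2*σ+1-1 = 2*σ by ring]
      rw [hinv, hsp]
      have h1 : (1:ℝ) ≤ 2*‖z‖/‖w‖ := (one_le_div hw').2 (by linarith)
      rw [div_eq_mul_inv] at h1
      calc ‖z‖ ^ (2*σ) = ‖z‖ ^ (2*σ) * 1 := (mul_one _).symm
        _ ≤ ‖z‖ ^ (2*σ) * (2*‖z‖*‖w‖⁻¹) :=
            mul_le_mul_of_nonneg_left h1 (Real.rpow_nonneg hzn _)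
        _ = 2 * (‖z‖ ^ (2*σ) * ‖z‖ * ‖w‖⁻¹) := by ring
    have bA1 : ‖gA σ (z+w)‖ ≤ 2*(σ+1)*3^(2*σ) * (‖z‖ ^ (2*σ+1) * ‖w‖ ^ (-(1:ℝ))) := by
      refine le_trans (norm_gA_le σ hσ (z+w)) ?_
      calc (σ+1)*‖z+w‖^(2*σ) ≤ (σ+1)*(3^(2*σ)*‖z‖^(2*σ)) :=
            mul_le_mul_of_nonneg_left f1 (by linarith)
        _ ≤ (σ+1)*(3^(2*σ)*(2 * (‖z‖ ^ (2*σ+1) * ‖w‖ ^ (-(1:ℝ)))) ) :=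
            mul_le_mul_of_nonneg_left (mul_le_mul_of_nonneg_left key1 h3.le) (by linarith)
        _ = 2*(σ+1)*3^(2*σ) * (‖z‖ ^ (2*σ+1) * ‖w‖ ^ (-(1:ℝ))) := by ring
    have bB1 : ‖gB σ (z+w)‖ ≤ 2*σ*3^(2*σ) * (‖z‖ ^ (2*σ+1) * ‖w‖ ^ (-(1:ℝ))) := by
      refine le_trans (norm_gB_le σ hσ (z+w)) ?_
      calc σ*‖z+w‖^(2*σ) ≤ σ*(3^(2*σ)*‖z‖^(2*σ)) :=
            mul_le_mul_of_nonneg_left f1 (by linarith)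
        _ ≤ σ*(3^(2*σ)*(2 * (‖z‖ ^ (2*σ+1) * ‖w‖ ^ (-(1:ℝ)))) ) :=
            mul_le_mul_of_nonneg_left (mul_le_mul_of_nonneg_left key1 h3.le) (by linarith)
        _ = 2*σ*3^(2*σ) * (‖z‖ ^ (2*σ+1) * ‖w‖ ^ (-(1:ℝ))) := by ring
    have hsp2 : ‖w‖ ^ (2*σ) = ‖w‖ ^ (2*σ-2) * ‖w‖^(2:ℕ) := rpow_split2 hw' (2*σ)
    have hw2 : ‖w‖ ^ (2*σ) ≤ ‖w‖ ^ (2*σ-2) * (4*‖z‖^(2:ℕ)) := by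
      rw [hsp2]
      exact mul_le_mul_of_nonneg_left f2 hr2
    have bA2 : ‖gA σ w‖ ≤ 4*(σ+1) * (‖z‖^(2:ℕ) * ‖w‖ ^ (2*σ-2)) := by
      refine le_trans (norm_gA_le σ hσ w) ?_
      calc (σ+1)*‖w‖^(2*σ) ≤ (σ+1)*(‖w‖ ^ (2*σ-2) * (4*‖z‖^(2:ℕ))) :=
            mul_le_mul_of_nonneg_left hw2 (by linarith)
        _ = 4*(σ+1) * (‖z‖^(2:ℕ) * ‖w‖ ^ (2*σ-2)) := by ring
    have bB2 : ‖gB σ w‖ ≤ 4*σ * (‖z‖^(2:ℕ) * ‖w‖ ^ (2*σ-2)) := by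
      refine le_trans (norm_gB_le σ hσ w) ?_
      calc σ*‖w‖^(2*σ) ≤ σ*(‖w‖ ^ (2*σ-2) * (4*‖z‖^(2:ℕ))) :=
            mul_le_mul_of_nonneg_left hw2 (by linarith)
        _ = 4*σ * (‖z‖^(2:ℕ) * ‖w‖ ^ (2*σ-2)) := by ring
    have hsp1 : ‖w‖ ^ (2*σ-1) = ‖w‖ ^ (2*σ-2) * ‖w‖ := by
      rw [rpow_split1 hw' (2*σ-1), show 2*σ-1-1 = 2*σ-2 by ring]
    have hw1 : ‖w‖ ^ (2*σ-1) * ‖z‖ ≤ ‖w‖ ^ (2*σ-2) * (2*‖z‖^(2:ℕ)) := by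
      rw [hsp1]
      calc ‖w‖ ^ (2*σ-2) * ‖w‖ * ‖z‖ ≤ ‖w‖ ^ (2*σ-2) * (2*‖z‖) * ‖z‖ := by
            refine mul_le_mul_of_nonneg_right (mul_le_mul_of_nonneg_left f3 hr2) hzn
        _ = ‖w‖ ^ (2*σ-2) * (2*‖z‖^(2:ℕ)) := by ring
    have bA3 : ‖Lm (aA σ w) (bA σ w) z‖ ≤ 4*σ*(σ+1) * (‖z‖^(2:ℕ) * ‖w‖ ^ (2*σ-2)) := by
      refine le_trans (Lm_apply_norm_le _ _ _) ?_
      have h1 := norm_aA_le σ hσ hw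
      have h2 := norm_bA_le σ hσ hw
      calc (‖aA σ w‖ + ‖bA σ w‖) * ‖z‖ ≤ (2*(σ*(σ+1)) * ‖w‖ ^ (2*σ-1)) * ‖z‖ := by
            refine mul_le_mul_of_nonneg_right (by linarith) hzn
        _ = 2*(σ*(σ+1)) * (‖w‖ ^ (2*σ-1) * ‖z‖) := by ring
        _ ≤ 2*(σ*(σ+1)) * (‖w‖ ^ (2*σ-2) * (2*‖z‖^(2:ℕ))) :=
            mul_le_mul_of_nonneg_left hw1 (by positivity)
        _ = 4*σ*(σ+1) * (‖z‖^(2:ℕ) * ‖w‖ ^ (2*σ-2)) := by ring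
    have bB3 : ‖Lm (bA σ w) (bB σ w) z‖ ≤ 4*σ*(σ+1) * (‖z‖^(2:ℕ) * ‖w‖ ^ (2*σ-2)) := by
      refine le_trans (Lm_apply_norm_le _ _ _) ?_
      have h1 := norm_bA_le σ hσ hw
      have h2 := norm_bB_le σ hσ hw
      calc (‖bA σ w‖ + ‖bB σ w‖) * ‖z‖ ≤ (2*(σ*(σ+1)) * ‖w‖ ^ (2*σ-1)) * ‖z‖ := by
            refine mul_le_mul_of_nonneg_right (by linarith) hzn
        _ = 2*(σ*(σ+1)) * (‖w‖ ^ (2*σ-1) * ‖z‖) := by ring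
        _ ≤ 2*(σ*(σ+1)) * (‖w‖ ^ (2*σ-2) * (2*‖z‖^(2:ℕ))) :=
            mul_le_mul_of_nonneg_left hw1 (by positivity)
        _ = 4*σ*(σ+1) * (‖z‖^(2:ℕ) * ‖w‖ ^ (2*σ-2)) := by ring
    have n1 : ‖gA σ (z+w) - gA σ w - Lm (aA σ w) (bA σ w) z‖
        ≤ ‖gA σ (z+w)‖ + ‖gA σ w‖ + ‖Lm (aA σ w) (bA σ w) z‖ := by
      calc ‖gA σ (z+w) - gA σ w - Lm (aA σ w) (bA σ w) z‖
          ≤ ‖gA σ (z+w) - gA σ w‖ + ‖Lm (aA σ w) (bA σ w) z‖ := norm_sub_le _ _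
        _ ≤ ‖gA σ (z+w)‖ + ‖gA σ w‖ + ‖Lm (aA σ w) (bA σ w) z‖ := by
            have := norm_sub_le (gA σ (z+w)) (gA σ w)
            linarith
    have n2 : ‖gB σ (z+w) - gB σ w - Lm (bA σ w) (bB σ w) z‖
        ≤ ‖gB σ (z+w)‖ + ‖gB σ w‖ + ‖Lm (bA σ w) (bB σ w) z‖ := by
      calc ‖gB σ (z+w) - gB σ w - Lm (bA σ w) (bB σ w) z‖
          ≤ ‖gB σ (z+w) - gB σ w‖ + ‖Lm (bA σ w) (bB σ w) z‖ := norm_sub_le _ _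
        _ ≤ ‖gB σ (z+w)‖ + ‖gB σ w‖ + ‖Lm (bA σ w) (bB σ w) z‖ := by
            have := norm_sub_le (gB σ (z+w)) (gB σ w)
            linarith
    have hc : ‖gA σ (z+w) - gA σ w - Lm (aA σ w) (bA σ w) z‖
        + ‖gB σ (z+w) - gB σ w - Lm (bA σ w) (bB σ w) z‖
        ≤ (2*(2*σ+1)*3^(2*σ)) * (‖z‖ ^ (2*σ+1) * ‖w‖ ^ (-(1:ℝ)))
          + (4*(2*σ+1) + 8*σ*(σ+1)) * (‖z‖^(2:ℕ) * ‖w‖ ^ (2*σ-2)) := by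
      calc ‖gA σ (z+w) - gA σ w - Lm (aA σ w) (bA σ w) z‖
          + ‖gB σ (z+w) - gB σ w - Lm (bA σ w) (bB σ w) z‖
          ≤ (2*(σ+1)*3^(2*σ) * (‖z‖ ^ (2*σ+1) * ‖w‖ ^ (-(1:ℝ)))
              + 4*(σ+1) * (‖z‖^(2:ℕ) * ‖w‖ ^ (2*σ-2))
              + 4*σ*(σ+1) * (‖z‖^(2:ℕ) * ‖w‖ ^ (2*σ-2)))
            + (2*σ*3^(2*σ) * (‖z‖ ^ (2*σ+1) * ‖w‖ ^ (-(1:ℝ)))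
              + 4*σ * (‖z‖^(2:ℕ) * ‖w‖ ^ (2*σ-2))
              + 4*σ*(σ+1) * (‖z‖^(2:ℕ) * ‖w‖ ^ (2*σ-2))) := by linarith
        _ = (2*(2*σ+1)*3^(2*σ)) * (‖z‖ ^ (2*σ+1) * ‖w‖ ^ (-(1:ℝ)))
            + (4*(2*σ+1) + 8*σ*(σ+1)) * (‖z‖^(2:ℕ) * ‖w‖ ^ (2*σ-2)) := by ring
    refine combo hc ht₁ ht₂ (by nlinarith) (by nlinarith)


theorem stmt_2 (σ : ℝ) (hσ : 1 ≤ σ) :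
    ∃ C : ℝ, 0 < C ∧
      (∀ z w : ℂ, w ≠ 0 →
        ‖Fnl σ z w‖ ≤
          C * (‖z‖ ^ (2 * σ + 1)
            + ‖z‖ ^ 2 * ‖w‖ ^ (2 * σ - 1))) ∧
      (∀ z w : ℝ → ℂ, Differentiable ℝ z → Differentiable ℝ w → (∀ x, w x ≠ 0) →
        ∀ x : ℝ,
          ‖deriv (fun y => Fnl σ (z y) (w y)) x‖ ≤
            C * (‖z x‖ ^ (2 * σ)
                + ‖z x‖ * ‖w x‖ ^ (2 * σ - 1))
              * ‖deriv z x‖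
            + C * (‖z x‖ ^ (2 * σ + 1) * ‖w x‖ ^ (-(1:ℝ))
                + ‖z x‖ ^ 2 * ‖w x‖ ^ (2 * σ - 2))
              * ‖deriv w x‖) := by
  obtain ⟨C₁, hC₁, hE1⟩ := E1 σ hσ
  obtain ⟨C₂, hC₂, hE2⟩ := E2 σ hσ
  obtain ⟨C₃, hC₃, hE3⟩ := E3 σ hσ
  refine ⟨C₁ + C₂ + C₃, by positivity, ?_, ?_⟩
  · intro z w hw
    have h := hE3 z w hw
    rw [Fnl_eq σ hw z, norm_neg]
    have hP : (0:ℝ) ≤ ‖z‖ ^ (2*σ+1) + ‖z‖^(2:ℕ) * ‖w‖ ^ (2*σ-1) := by positivity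
    nlinarith
  · intro z w hz hw hw0 x
    set Z := z x with hZ
    set W := w x with hW
    set Z' := deriv z x with hZ'
    set W' := deriv w x with hW'
    have hzw : HasDerivAt (fun y => z y + w y) (Z' + W') x :=
      ((hz x).hasDerivAt.add (hw x).hasDerivAt)
    have h1 : HasDerivAt (fun y => gg σ (z y + w y))
        (Lm (gA σ (Z+W)) (gB σ (Z+W)) (Z'+W')) x :=
      (hasFDerivAt_gg_all σ hσ (Z+W)).comp_hasDerivAt x hzw
    have h2 : HasDerivAt (fun y => gg σ (w y)) (Lm (gA σ W) (gB σ W) W') x :=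
      (hasFDerivAt_gg_all σ hσ W).comp_hasDerivAt x (hw x).hasDerivAt
    have h3 : HasDerivAt (fun y => gA σ (w y)) (Lm (aA σ W) (bA σ W) W') x :=
      (hasFDerivAt_gA σ (hw0 x)).comp_hasDerivAt x (hw x).hasDerivAt
    have h4 : HasDerivAt (fun y => gB σ (w y)) (Lm (bA σ W) (bB σ W) W') x :=
      (hasFDerivAt_gB σ (hw0 x)).comp_hasDerivAt x (hw x).hasDerivAt
    have h5 : HasDerivAt (fun y => starRingEnd ℂ (z y)) (starRingEnd ℂ Z') x := by
      have := (Complex.conjCLE.toContinuousLinearMap.hasFDerivAt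
        (x := Z)).comp_hasDerivAt x (hz x).hasDerivAt
      exact this
    have h6 := h3.mul (hz x).hasDerivAt
    have h7 := h4.mul h5
    have hF : (fun y => Fnl σ (z y) (w y))
        = fun y => -(gg σ (z y + w y)) + gg σ (w y) + gA σ (w y) * z y
            + gB σ (w y) * starRingEnd ℂ (z y) := by
      funext y
      rw [Fnl_eq σ (hw0 y) (z y), Lm_apply]
      ring
    have hD : HasDerivAt (fun y => Fnl σ (z y) (w y))
        (-(Lm (gA σ (Z+W)) (gB σ (Z+W)) (Z'+W')) + Lm (gA σ W) (gB σ W) W'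
          + (Lm (aA σ W) (bA σ W) W' * Z + gA σ W * Z')
          + (Lm (bA σ W) (bB σ W) W' * starRingEnd ℂ Z
              + gB σ W * starRingEnd ℂ Z')) x := by
      rw [hF]
      exact ((h1.neg.add h2).add h6).add h7
    rw [hD.deriv]
    have hgroup : -(Lm (gA σ (Z+W)) (gB σ (Z+W)) (Z'+W')) + Lm (gA σ W) (gB σ W) W'
          + (Lm (aA σ W) (bA σ W) W' * Z + gA σ W * Z')
          + (Lm (bA σ W) (bB σ W) W' * starRingEnd ℂ Z + gB σ W * starRingEnd ℂ Z')
        = (gA σ W - gA σ (Z+W)) * Z' + (gB σ W - gB σ (Z+W)) * (starRingEnd ℂ Z')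
          + (-(gA σ (Z+W) - gA σ W - Lm (aA σ W) (bA σ W) Z)) * W'
          + (-(gB σ (Z+W) - gB σ W - Lm (bA σ W) (bB σ W) Z)) * (starRingEnd ℂ W') := by
      simp only [Lm_apply, map_add]
      ring
    rw [hgroup]
    have e1 := hE1 Z W (hw0 x)
    have e2 := hE2 Z W (hw0 x)
    have hT1 : ‖(gA σ W - gA σ (Z+W)) * Z' + (gB σ W - gB σ (Z+W)) * (starRingEnd ℂ Z')
          + (-(gA σ (Z+W) - gA σ W - Lm (aA σ W) (bA σ W) Z)) * W'
          + (-(gB σ (Z+W) - gB σ W - Lm (bA σ W) (bB σ W) Z)) * (starRingEnd ℂ W')‖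
        ≤ (‖gA σ (Z+W) - gA σ W‖ + ‖gB σ (Z+W) - gB σ W‖) * ‖Z'‖
          + (‖gA σ (Z+W) - gA σ W - Lm (aA σ W) (bA σ W) Z‖
              + ‖gB σ (Z+W) - gB σ W - Lm (bA σ W) (bB σ W) Z‖) * ‖W'‖ := by
      have t1 := norm_add_le ((gA σ W - gA σ (Z+W)) * Z') ((gB σ W - gB σ (Z+W)) * (starRingEnd ℂ Z'))
      have t2 := norm_add_le ((gA σ W - gA σ (Z+W)) * Z' + (gB σ W - gB σ (Z+W)) * (starRingEnd ℂ Z'))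
        ((-(gA σ (Z+W) - gA σ W - Lm (aA σ W) (bA σ W) Z)) * W')
      have t3 := norm_add_le ((gA σ W - gA σ (Z+W)) * Z' + (gB σ W - gB σ (Z+W)) * (starRingEnd ℂ Z')
        + (-(gA σ (Z+W) - gA σ W - Lm (aA σ W) (bA σ W) Z)) * W')
        ((-(gB σ (Z+W) - gB σ W - Lm (bA σ W) (bB σ W) Z)) * (starRingEnd ℂ W'))
      simp only [norm_mul, norm_neg, RCLike.norm_conj, norm_sub_rev (gA σ W) (gA σ (Z+W)),
        norm_sub_rev (gB σ W) (gB σ (Z+W))] at t1 t2 t3 ⊢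
      nlinarith [norm_nonneg Z', norm_nonneg W']
    refine le_trans hT1 ?_
    have hP1 : (0:ℝ) ≤ ‖Z‖ ^ (2*σ) + ‖Z‖ * ‖W‖ ^ (2*σ-1) := by positivity
    have hP2 : (0:ℝ) ≤ ‖Z‖ ^ (2*σ+1) * ‖W‖ ^ (-(1:ℝ)) + ‖Z‖^(2:ℕ) * ‖W‖ ^ (2*σ-2) := by positivity
    have hb1 : (‖gA σ (Z+W) - gA σ W‖ + ‖gB σ (Z+W) - gB σ W‖) * ‖Z'‖
        ≤ (C₁ + C₂ + C₃) * (‖Z‖ ^ (2*σ) + ‖Z‖ * ‖W‖ ^ (2*σ-1)) * ‖Z'‖ := by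
      refine mul_le_mul_of_nonneg_right ?_ (norm_nonneg Z')
      nlinarith
    have hb2 : (‖gA σ (Z+W) - gA σ W - Lm (aA σ W) (bA σ W) Z‖
          + ‖gB σ (Z+W) - gB σ W - Lm (bA σ W) (bB σ W) Z‖) * ‖W'‖
        ≤ (C₁ + C₂ + C₃) * (‖Z‖ ^ (2*σ+1) * ‖W‖ ^ (-(1:ℝ)) + ‖Z‖^(2:ℕ) * ‖W‖ ^ (2*σ-2)) * ‖W'‖ := by
      refine mul_le_mul_of_nonneg_right ?_ (norm_nonneg W')
      nlinarith
    linarith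
end
end
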